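/- arXiv:2311.14921 — 8 statements merged into one kernel-verified Lean document; each statement's English description precedes it below -/
import Mathlib

section
/- Let g(β) = c · ∏_{j=1}^{n} (β − β_j) be a complex polynomial with c ≠ 0 and roots β_1, …, β_n listed with multiplicity, and let R > 0 satisfy |β_j| ≠ R for all j. Then (1/(2π)) ∫_0^{2π} log|g(R e^{iθ})| dθ = log|c| + Σ_{j=1}^{n} log(max(R, |β_j|)). -/
open Real Complex Finset intervalIntegral

lemma key_zero (a : ℂ) (ha : ‖a‖ < 1) :
    ∫ θ in (0:ℝ)..(2*π), Real.log (‖1 - a * Complex.exp (θ * Complex.I)‖) = 0 := by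
  have hslit : ∀ z : ℂ, ‖z‖ ≤ 1 → (1 - a * z) ∈ Complex.slitPlane := by
    intro z hz
    refine Complex.mem_slitPlane_iff.2 (Or.inl ?_)
    have h1 : (a * z).re ≤ ‖a * z‖ := Complex.re_le_norm _
    have h2 : ‖a * z‖ < 1 := by
      rw [norm_mul]
      calc ‖a‖ * ‖z‖ ≤ ‖a‖ * 1 :=
            mul_le_mul_of_nonneg_left hz (norm_nonneg a)
        _ < 1 := by simpa using ha
    simp only [Complex.sub_re, Complex.one_re]
    linarith
  set f : ℂ → ℂ := fun z => Complex.log (1 - a * z) with hf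
  have hd : DifferentiableOn ℂ f (Metric.closedBall 0 1) := by
    intro z hz
    have hz1 : ‖z‖ ≤ 1 := by
      simpa [Complex.dist_eq] using Metric.mem_closedBall.1 hz
    exact (((differentiableAt_const (1:ℂ)).sub
      ((differentiableAt_const a).mul differentiableAt_id)).clog (hslit z hz1)).differentiableWithinAt
  have hcauchy := hd.circleIntegral_sub_inv_smul (w := 0) (by simp)
  have hf0 : f 0 = 0 := by simp [hf]
  rw [hf0, smul_zero] at hcauchy
  have hcont : Continuous fun θ : ℝ => f (Complex.exp (θ * Complex.I)) := by
    apply Continuous.clog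
    · continuity
    · intro θ
      exact hslit _ (le_of_eq (Complex.norm_exp_ofReal_mul_I θ))
  -- unfold circle integral
  rw [circleIntegral] at hcauchy
  simp only [deriv_circleMap, circleMap, Complex.ofReal_one, one_mul, zero_add, sub_zero,
    smul_eq_mul] at hcauchy
  have hint : (∫ θ in (0:ℝ)..(2*π), f (Complex.exp (θ * Complex.I))) = 0 := by
    have hne : ∀ θ : ℝ, Complex.exp (θ * Complex.I) ≠ 0 := fun θ => Complex.exp_ne_zero _
    have : (∫ θ in (0:ℝ)..(2*π),
        Complex.exp (θ * Complex.I) * Complex.I * ((Complex.exp (θ * Complex.I))⁻¹ * f (Complex.exp (θ * Complex.I)))) =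
        ∫ θ in (0:ℝ)..(2*π), Complex.I * f (Complex.exp (θ * Complex.I)) := by
      apply intervalIntegral.integral_congr
      intro θ _
      field_simp
    rw [this] at hcauchy
    have := hcauchy
    rw [intervalIntegral.integral_const_mul] at this
    have hI : (Complex.I : ℂ) ≠ 0 := Complex.I_ne_zero
    exact (mul_eq_zero.1 this).resolve_left hI
  have hii : IntervalIntegrable (fun θ : ℝ => f (Complex.exp (θ * Complex.I)))
      MeasureTheory.volume 0 (2*π) := hcont.intervalIntegrable _ _
  have := Complex.reCLM.intervalIntegral_comp_comm hii
  rw [hint] at this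
  simp only [map_zero] at this
  calc (∫ θ in (0:ℝ)..(2*π), Real.log (‖1 - a * Complex.exp (θ * Complex.I)‖))
      = ∫ θ in (0:ℝ)..(2*π), Complex.reCLM (f (Complex.exp (θ * Complex.I))) := by
        apply intervalIntegral.integral_congr
        intro θ _
        simp [hf, Complex.log_re]
    _ = 0 := this

lemma split_log (b : ℝ) (hb : 0 < b) (a : ℂ) (ha : ‖a‖ < 1)
    (F : ℝ → ℝ) (hF : ∀ θ, F θ = b * ‖1 - a * Complex.exp (θ * Complex.I)‖) :
    ∫ θ in (0:ℝ)..(2*π), Real.log (F θ) = 2*π * Real.log b := by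
  have hne : ∀ θ : ℝ, (1 - a * Complex.exp (θ * Complex.I)) ≠ 0 := by
    intro θ h
    have : ‖a * Complex.exp (θ * Complex.I)‖ = 1 := by
      have := congrArg (‖·‖) (sub_eq_zero.1 h)
      simpa using this.symm
    rw [norm_mul, Complex.norm_exp_ofReal_mul_I, mul_one] at this
    exact absurd this (ne_of_lt ha)
  have hi : IntervalIntegrable (fun θ : ℝ =>
      Real.log (‖1 - a * Complex.exp (θ * Complex.I)‖)) MeasureTheory.volume 0 (2*π) := by
    apply Continuous.intervalIntegrable
    apply Continuous.log
    · continuity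
    · intro θ; exact norm_ne_zero_iff.mpr (hne θ)
  have heq : ∀ θ ∈ Set.uIcc (0:ℝ) (2*π), Real.log (F θ) =
      Real.log b + Real.log (‖1 - a * Complex.exp (θ * Complex.I)‖) := by
    intro θ _
    rw [hF θ, Real.log_mul (ne_of_gt hb) (norm_ne_zero_iff.mpr (hne θ))]
  rw [intervalIntegral.integral_congr heq, intervalIntegral.integral_add
    (intervalIntegrable_const) hi, key_zero a ha]
  simp [intervalIntegral.integral_const, mul_comm]

lemma root_int (β : ℂ) (R : ℝ) (hR : 0 < R) (hβ : ‖β‖ ≠ R) :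
    ∫ θ in (0:ℝ)..(2*π), Real.log (‖(R : ℂ) * Complex.exp (θ * Complex.I) - β‖) =
      2*π * Real.log (max R (‖β‖)) := by
  rcases lt_or_gt_of_ne hβ with h | h
  · -- |β| < R
    have hmax : max R (‖β‖) = R := max_eq_left h.le
    rw [hmax]
    refine split_log R hR ((starRingEnd ℂ) β / R) ?_ _ ?_
    · rw [norm_div, Complex.norm_conj, Complex.norm_real, Real.norm_eq_abs, abs_of_pos hR]
      exact (div_lt_one hR).2 h
    · intro θ
      have hexp : Complex.exp (θ * Complex.I) ≠ 0 := Complex.exp_ne_zero _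
      have hz : (R : ℂ) * Complex.exp (θ * Complex.I) - β =
          Complex.exp (θ * Complex.I) * (R : ℂ) *
          (starRingEnd ℂ) (1 - ((starRingEnd ℂ) β / R) * Complex.exp (θ * Complex.I)) := by
        have hc : (starRingEnd ℂ) (1 - ((starRingEnd ℂ) β / R) * Complex.exp (θ * Complex.I)) =
            1 - (β / R) * (Complex.exp (θ * Complex.I))⁻¹ := by
          rw [map_sub, map_one, map_mul, map_div₀, Complex.conj_conj, Complex.conj_ofReal,
            ← Complex.exp_conj]
          congr 2
          rw [map_mul, Complex.conj_ofReal, Complex.conj_I, mul_neg, Complex.exp_neg]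
        rw [hc]
        field_simp [hexp, Complex.ofReal_ne_zero.2 hR.ne']
      rw [hz, norm_mul, norm_mul, Complex.norm_conj, Complex.norm_exp_ofReal_mul_I,
        Complex.norm_real, Real.norm_eq_abs, abs_of_pos hR, one_mul]
  · -- |β| > R
    have h0 : β ≠ 0 := by
      intro hβ0; rw [hβ0] at h; simp at h; linarith
    have hmax : max R (‖β‖) = ‖β‖ := max_eq_right h.le
    rw [hmax]
    have hb0 : 0 < ‖β‖ := norm_pos_iff.mpr h0
    refine split_log (‖β‖) hb0 ((R : ℂ) / β) ?_ _ ?_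
    · rw [norm_div, Complex.norm_real, Real.norm_eq_abs, abs_of_pos hR]
      exact (div_lt_one hb0).2 h
    · intro θ
      have hz : (R : ℂ) * Complex.exp (θ * Complex.I) - β =
          (-β) * (1 - ((R : ℂ) / β) * Complex.exp (θ * Complex.I)) := by
        field_simp
        ring
      rw [hz, norm_mul, norm_neg]

/-- For a polynomial `g(β) = c ∏_{j=1}^n (β − β_j)` with `c ≠ 0` and `R > 0` with
`|β_j| ≠ R` for all `j`,
`(1/(2π)) ∫_0^{2π} log|g(R e^{iθ})| dθ = log|c| + Σ_j log(max(R, |β_j|))`. -/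
theorem circle_log_potential_polynomial (n : ℕ) (c : ℂ) (hc : c ≠ 0) (βs : Fin n → ℂ)
    (R : ℝ) (hR : 0 < R) (hβ : ∀ j, ‖βs j‖ ≠ R) :
    (1 / (2 * π)) * ∫ θ in (0 : ℝ)..(2 * π),
        Real.log ‖
          (c * ∏ j : Fin n, ((R : ℂ) * Complex.exp (θ * Complex.I) - βs j))‖ =
      Real.log ‖c‖ + ∑ j : Fin n, Real.log (max R (‖βs j‖)) := by
  have hne : ∀ (θ : ℝ) (j : Fin n), ((R : ℂ) * Complex.exp (θ * Complex.I) - βs j) ≠ 0 := by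
    intro θ j h
    have h2 := congrArg (‖·‖) (sub_eq_zero.1 h)
    rw [norm_mul, Complex.norm_exp_ofReal_mul_I, mul_one, Complex.norm_real, Real.norm_eq_abs, abs_of_pos hR] at h2
    exact (hβ j) h2.symm
  have hint : ∀ j : Fin n, IntervalIntegrable
      (fun θ : ℝ => Real.log (‖(R : ℂ) * Complex.exp (θ * Complex.I) - βs j‖))
      MeasureTheory.volume 0 (2*π) := by
    intro j
    apply Continuous.intervalIntegrable
    apply Continuous.log
    · continuity
    · intro θ; exact norm_ne_zero_iff.mpr (hne θ j)
  have heq : ∀ θ ∈ Set.uIcc (0:ℝ) (2*π),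
      Real.log (‖c * ∏ j : Fin n, ((R : ℂ) * Complex.exp (θ * Complex.I) - βs j)‖) =
      Real.log (‖c‖) +
        ∑ j : Fin n, Real.log (‖(R : ℂ) * Complex.exp (θ * Complex.I) - βs j‖) := by
    intro θ _
    rw [norm_mul, norm_prod, Real.log_mul (norm_ne_zero_iff.mpr hc)
      (Finset.prod_ne_zero_iff.2 fun j _ => norm_ne_zero_iff.mpr (hne θ j)),
      Real.log_prod fun j _ => norm_ne_zero_iff.mpr (hne θ j)]
  have h2 : IntervalIntegrable (fun θ : ℝ => ∑ j : Fin n,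
      Real.log (‖(R : ℂ) * Complex.exp (θ * Complex.I) - βs j‖))
      MeasureTheory.volume 0 (2*π) := by
    have h3 := IntervalIntegrable.sum Finset.univ fun (j : Fin n) (_ : j ∈ Finset.univ) => hint j
    convert h3 using 1
    · rfl
    ext θ
    simp
  rw [intervalIntegral.integral_congr heq, intervalIntegral.integral_add
    intervalIntegrable_const h2,
    intervalIntegral.integral_finset_sum (fun (j : Fin n) (_ : j ∈ Finset.univ) => hint j)]
  have hroots : ∀ j : Fin n, (∫ θ in (0:ℝ)..(2*π),
      Real.log (‖(R : ℂ) * Complex.exp (θ * Complex.I) - βs j‖)) =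
      2*π * Real.log (max R (‖βs j‖)) := fun j => root_int (βs j) R hR (hβ j)
  rw [Finset.sum_congr rfl fun j _ => hroots j, intervalIntegral.integral_const, ← Finset.mul_sum]
  have hπ : (2 * π) ≠ 0 := by positivity
  field_simp
  ring
end

section
/- Let t_L, t_R > 0 be real, N ≥ 1 an integer, and A the N×N complex matrix with A_{j,j+1} = t_L and A_{j+1,j} = t_R for 1 ≤ j ≤ N−1 and all other entries zero. Then a complex number E is an eigenvalue of A if and only if E = 2√(t_L t_R) · cos(mπ/(N+1)) for some integer m with 1 ≤ m ≤ N. -/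
open Real Complex Matrix

/-- The open-boundary Hatano–Nelson Hamiltonian: the `N×N` matrix with `A_{j,j+1} = t_L`,
`A_{j+1,j} = t_R` and all other entries zero. -/
noncomputable def hatanoNelson (N : ℕ) (tL tR : ℝ) : Matrix (Fin N) (Fin N) ℂ :=
  Matrix.of fun i j =>
    if (j : ℕ) = (i : ℕ) + 1 then (tL : ℂ)
    else if (i : ℕ) = (j : ℕ) + 1 then (tR : ℂ)
    else 0

/-- Row computation for the Hatano–Nelson matrix acting on a shifted sequence. -/
lemma hn_row (N : ℕ) (tL tR : ℝ) (w : ℕ → ℂ) (hw0 : w 0 = 0) (hwN : w (N + 1) = 0)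
    (i : Fin N) :
    (hatanoNelson N tL tR).mulVec (fun j => w ((j : ℕ) + 1)) i
      = tL * w ((i : ℕ) + 2) + tR * w (i : ℕ) := by
  unfold hatanoNelson
  rw [Matrix.mulVec]
  show (∑ j : Fin N, (if (j : ℕ) = (i : ℕ) + 1 then (tL : ℂ)
      else if (i : ℕ) = (j : ℕ) + 1 then (tR : ℂ) else 0) * w ((j : ℕ) + 1)) = _
  have hsplit : ∀ j : Fin N,
      (if (j : ℕ) = (i : ℕ) + 1 then (tL : ℂ)
        else if (i : ℕ) = (j : ℕ) + 1 then (tR : ℂ) else 0) * w ((j : ℕ) + 1)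
      = (if (j : ℕ) = (i : ℕ) + 1 then (tL : ℂ) * w ((j : ℕ) + 1) else 0)
        + (if (i : ℕ) = (j : ℕ) + 1 then (tR : ℂ) * w ((j : ℕ) + 1) else 0) := by
    intro j
    by_cases h1 : (j : ℕ) = (i : ℕ) + 1
    · have h2 : ¬ ((i : ℕ) = (j : ℕ) + 1) := by omega
      rw [if_pos h1, if_pos h1, if_neg h2, add_zero]
    · by_cases h2 : (i : ℕ) = (j : ℕ) + 1
      · rw [if_neg h1, if_pos h2, if_neg h1, if_pos h2, zero_add]
      · rw [if_neg h1, if_neg h2, if_neg h1, if_neg h2, zero_mul, add_zero]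
  simp only [hsplit, Finset.sum_add_distrib]
  congr 1
  · -- first sum
    by_cases h : (i : ℕ) + 1 < N
    · have := Finset.sum_ite_eq' (Finset.univ : Finset (Fin N)) (⟨(i : ℕ) + 1, h⟩ : Fin N)
        (fun j => (tL : ℂ) * w ((j : ℕ) + 1))
      simp only [Finset.mem_univ, if_true] at this
      rw [← this]
      apply Finset.sum_congr rfl
      intro j _
      congr 1
      simp [Fin.ext_iff]
    · have hiN : (i : ℕ) + 1 = N := by omega
      have hz : ∀ j : Fin N, (if (j : ℕ) = (i : ℕ) + 1 then (tL : ℂ) * w ((j : ℕ) + 1) else 0)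
          = 0 := by
        intro j
        have hj := j.isLt
        have : (j : ℕ) ≠ (i : ℕ) + 1 := by omega
        simp [this]
      rw [Finset.sum_congr rfl (fun j _ => hz j)]
      have : (i : ℕ) + 2 = N + 1 := by omega
      simp [this, hwN]
  · -- second sum
    by_cases h : 1 ≤ (i : ℕ)
    · have hlt : (i : ℕ) - 1 < N := by omega
      have := Finset.sum_ite_eq' (Finset.univ : Finset (Fin N)) (⟨(i : ℕ) - 1, hlt⟩ : Fin N)
        (fun j => (tR : ℂ) * w ((j : ℕ) + 1))
      simp only [Finset.mem_univ, if_true] at this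
      have hrw : ∀ j : Fin N,
          (if (i : ℕ) = (j : ℕ) + 1 then (tR : ℂ) * w ((j : ℕ) + 1) else 0)
          = (if j = (⟨(i : ℕ) - 1, hlt⟩ : Fin N) then (tR : ℂ) * w ((j : ℕ) + 1) else 0) := by
        intro j
        by_cases hc : (i : ℕ) = (j : ℕ) + 1
        · have : j = (⟨(i : ℕ) - 1, hlt⟩ : Fin N) := by
            simp only [Fin.ext_iff]; omega
          rw [if_pos hc, if_pos this]
        · have : j ≠ (⟨(i : ℕ) - 1, hlt⟩ : Fin N) := by
            simp only [Fin.ext_iff, ne_eq]; omega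
          rw [if_neg hc, if_neg this]
      rw [Finset.sum_congr rfl (fun j _ => hrw j), this]
      have : (i : ℕ) - 1 + 1 = (i : ℕ) := by omega
      rw [this]
    · have hi0 : (i : ℕ) = 0 := by omega
      have hz : ∀ j : Fin N, (if (i : ℕ) = (j : ℕ) + 1 then (tR : ℂ) * w ((j : ℕ) + 1) else 0)
          = 0 := by
        intro j
        have : (i : ℕ) ≠ (j : ℕ) + 1 := by omega
        simp [this]
      rw [Finset.sum_congr rfl (fun j _ => hz j)]
      simp [hi0, hw0]

/-- The key real identity behind the eigenvector recurrence. -/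
lemma hn_recur (tL tR : ℝ) (htL : 0 < tL) (htR : 0 < tR) (θ : ℝ) (k : ℕ) :
    tL * (Real.sqrt (tR / tL) ^ (k + 2) * Real.sin (((k : ℝ) + 2) * θ))
      + tR * (Real.sqrt (tR / tL) ^ k * Real.sin ((k : ℝ) * θ))
    = (2 * Real.sqrt (tL * tR) * Real.cos θ)
        * (Real.sqrt (tR / tL) ^ (k + 1) * Real.sin (((k : ℝ) + 1) * θ)) := by
  set r := Real.sqrt (tR / tL) with hr
  set s := Real.sqrt (tL * tR) with hs
  have h1 : tL * r = s := by
    rw [hr, hs, ← Real.sqrt_sq htL.le, ← Real.sqrt_mul (sq_nonneg tL)]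
    congr 1
    field_simp
    rw [Real.sq_sqrt (sq_nonneg _)]
  have h2 : s * r = tR := by
    rw [hr, hs, ← Real.sqrt_mul (mul_nonneg htL.le htR.le)]
    rw [show tL * tR * (tR / tL) = tR ^ 2 by field_simp]
    exact Real.sqrt_sq htR.le
  have htrig : Real.sin (((k : ℝ) + 2) * θ) + Real.sin ((k : ℝ) * θ)
      = 2 * Real.cos θ * Real.sin (((k : ℝ) + 1) * θ) := by
    have e1 : ((k : ℝ) + 2) * θ = ((k : ℝ) + 1) * θ + θ := by ring
    have e2 : ((k : ℝ)) * θ = ((k : ℝ) + 1) * θ - θ := by ring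
    rw [e1, e2, Real.sin_add, Real.sin_sub]
    ring
  have hL : tL * (r ^ (k + 2) * Real.sin (((k : ℝ) + 2) * θ))
      = s * r ^ (k + 1) * Real.sin (((k : ℝ) + 2) * θ) := by
    rw [pow_succ, ← h1]
    ring
  have hR : tR * (r ^ k * Real.sin ((k : ℝ) * θ))
      = s * r ^ (k + 1) * Real.sin ((k : ℝ) * θ) := by
    rw [pow_succ, ← h2]
    ring
  rw [hL, hR, ← mul_add, htrig]
  ring

/-- Construction of the eigenvector for each admissible `m`. -/
lemma hn_eigenvector (N : ℕ) (hN : 1 ≤ N) (tL tR : ℝ) (htL : 0 < tL) (htR : 0 < tR)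
    (m : ℕ) (hm1 : 1 ≤ m) (hmN : m ≤ N) :
    ∃ v : Fin N → ℂ, v ≠ 0 ∧ (hatanoNelson N tL tR).mulVec v
      = ((2 * Real.sqrt (tL * tR) * Real.cos (m * π / (N + 1)) : ℝ) : ℂ) • v := by
  set θ : ℝ := m * π / (N + 1) with hθ
  set r : ℝ := Real.sqrt (tR / tL) with hr
  set w : ℕ → ℂ := fun k => ((r ^ k * Real.sin (k * θ) : ℝ) : ℂ) with hw
  have hw0 : w 0 = 0 := by simp [hw]
  have hwN : w (N + 1) = 0 := by
    have hN1 : ((N : ℝ) + 1) ≠ 0 := by positivity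
    have : ((N + 1 : ℕ) : ℝ) * θ = m * π := by
      rw [hθ]
      push_cast
      field_simp
    simp only [hw, this]
    rw [Real.sin_nat_mul_pi]
    simp
  refine ⟨fun j => w ((j : ℕ) + 1), ?_, ?_⟩
  · -- nonzero: first entry is r * sin θ ≠ 0
    have hθpos : 0 < θ := by
      rw [hθ]
      have : (0 : ℝ) < m := by exact_mod_cast hm1
      positivity
    have hθlt : θ < π := by
      rw [hθ, div_lt_iff₀ (by positivity)]
      have hmlt : (m : ℝ) < (N : ℝ) + 1 := by exact_mod_cast Nat.lt_succ_of_le hmN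
      nlinarith [Real.pi_pos]
    have hsin : 0 < Real.sin θ := Real.sin_pos_of_pos_of_lt_pi hθpos hθlt
    have hrpos : 0 < r := Real.sqrt_pos.mpr (div_pos htR htL)
    intro hv
    have h0 : w 1 = 0 := by
      have := congrFun hv ⟨0, hN⟩
      simpa using this
    rw [hw] at h0
    simp only [pow_one, Nat.cast_one, one_mul, Complex.ofReal_eq_zero] at h0
    nlinarith
  · funext i
    rw [hn_row N tL tR w hw0 hwN i]
    show (tL : ℂ) * w ((i : ℕ) + 2) + (tR : ℂ) * w (i : ℕ)
        = ((2 * Real.sqrt (tL * tR) * Real.cos (m * π / (N + 1)) : ℝ) : ℂ) * w ((i : ℕ) + 1)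
    simp only [hw, ← hθ]
    simp only [← Complex.ofReal_mul, ← Complex.ofReal_add]
    apply Complex.ofReal_inj.mpr
    have := hn_recur tL tR htL htR θ (i : ℕ)
    push_cast at this ⊢
    linarith

/-- Eigenvalue iff root of the characteristic polynomial. -/
lemma hn_eigen_iff_root (N : ℕ) (tL tR : ℝ) (E : ℂ) :
    (∃ v : Fin N → ℂ, v ≠ 0 ∧ (hatanoNelson N tL tR).mulVec v = E • v) ↔
      (hatanoNelson N tL tR).charpoly.eval E = 0 := by
  set A := hatanoNelson N tL tR with hA
  have heval : A.charpoly.eval E = (Matrix.diagonal (fun _ : Fin N => E) - A).det := by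
    rw [Matrix.charpoly, ← Polynomial.coe_evalRingHom, RingHom.map_det]
    congr 1
    ext i j
    by_cases h : i = j <;>
      simp [h, Matrix.charmatrix_apply, Matrix.diagonal, Matrix.sub_apply]
  rw [heval, ← Matrix.exists_mulVec_eq_zero_iff]
  constructor
  · rintro ⟨v, hv, hEv⟩
    refine ⟨v, hv, ?_⟩
    rw [Matrix.sub_mulVec, hEv]
    ext k
    simp [Matrix.mulVec_diagonal]
  · rintro ⟨v, hv, hEv⟩
    refine ⟨v, hv, ?_⟩
    rw [Matrix.sub_mulVec, sub_eq_zero] at hEv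
    rw [← hEv]
    ext k
    simp [Matrix.mulVec_diagonal]

/-- `E` is an eigenvalue of the open-boundary Hatano–Nelson Hamiltonian if and only if
`E = 2√(t_L t_R) cos(mπ/(N+1))` for some integer `1 ≤ m ≤ N`. -/
theorem hatanoNelson_eigenvalues (N : ℕ) (hN : 1 ≤ N) (tL tR : ℝ)
    (htL : 0 < tL) (htR : 0 < tR) (E : ℂ) :
    (∃ v : Fin N → ℂ, v ≠ 0 ∧ (hatanoNelson N tL tR).mulVec v = E • v) ↔
      ∃ m : ℕ, 1 ≤ m ∧ m ≤ N ∧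
        E = ((2 * Real.sqrt (tL * tR) * Real.cos (m * π / (N + 1)) : ℝ) : ℂ) := by
  set A := hatanoNelson N tL tR with hA
  set Em : ℕ → ℂ := fun m => ((2 * Real.sqrt (tL * tR) * Real.cos (m * π / (N + 1)) : ℝ) : ℂ)
    with hEm
  set p := A.charpoly with hp
  have hs : 0 < Real.sqrt (tL * tR) := Real.sqrt_pos.mpr (mul_pos htL htR)
  -- Injectivity of Em on Icc 1 N
  have hinj : Set.InjOn Em ((Finset.Icc 1 N : Finset ℕ) : Set ℕ) := by
    intro a ha b hb hab
    simp only [Finset.coe_Icc, Set.mem_Icc] at ha hb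
    rw [hEm] at hab
    simp only [Complex.ofReal_inj] at hab
    have h2s : (2 : ℝ) * Real.sqrt (tL * tR) ≠ 0 := by positivity
    have hcos : Real.cos (a * π / (N + 1)) = Real.cos (b * π / (N + 1)) :=
      mul_left_cancel₀ h2s hab
    have hmem : ∀ c : ℕ, c ≤ N → (c : ℝ) * π / (N + 1) ∈ Set.Icc 0 π := by
      intro c hc
      constructor
      · positivity
      · rw [div_le_iff₀ (by positivity)]
        have : (c : ℝ) ≤ (N : ℝ) + 1 := by
          have : (c : ℝ) ≤ (N : ℝ) := by exact_mod_cast hc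
          linarith
        nlinarith [Real.pi_pos]
    have heq := Real.injOn_cos (hmem a ha.2) (hmem b hb.2) hcos
    have hπ : π ≠ 0 := Real.pi_ne_zero
    have hdq : ((N : ℝ) + 1) ≠ 0 := by positivity
    rw [div_eq_div_iff hdq hdq] at heq
    have h1 : (a : ℝ) * π = (b : ℝ) * π := mul_right_cancel₀ hdq heq
    have h2 : (a : ℝ) = (b : ℝ) := mul_right_cancel₀ hπ h1
    exact_mod_cast h2
  -- each Em m is a root of p
  have hroot : ∀ m : ℕ, 1 ≤ m → m ≤ N → p.eval (Em m) = 0 := by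
    intro m hm1 hmN
    rw [hp, ← hn_eigen_iff_root]
    exact hn_eigenvector N hN tL tR htL htR m hm1 hmN
  have hpmonic : p.Monic := Matrix.charpoly_monic A
  have hpne : p ≠ 0 := hpmonic.ne_zero
  have hdeg : p.natDegree = N := by
    rw [hp, Matrix.charpoly_natDegree_eq_dim, Fintype.card_fin]
  -- the finset of candidate eigenvalues
  set T : Finset ℂ := (Finset.Icc 1 N).image Em with hT
  have hcardT : T.card = N := by
    rw [hT, Finset.card_image_of_injOn hinj, Nat.card_Icc]
    omega
  have hTsub : T.val ≤ p.roots := by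
    rw [Multiset.le_iff_subset T.nodup]
    intro x hx
    rw [Finset.mem_val, hT, Finset.mem_image] at hx
    obtain ⟨m, hm, rfl⟩ := hx
    rw [Finset.mem_Icc] at hm
    rw [Polynomial.mem_roots hpne]
    exact hroot m hm.1 hm.2
  have hrootsT : p.roots = T.val := by
    refine (Multiset.eq_of_le_of_card_le hTsub ?_).symm
    calc Multiset.card p.roots ≤ p.natDegree := Polynomial.card_roots' p
      _ = N := hdeg
      _ = T.card := hcardT.symm
  rw [hn_eigen_iff_root]
  constructor
  · intro hEv
    have hE : E ∈ p.roots := by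
      rw [Polynomial.mem_roots hpne]; exact hEv
    rw [hrootsT, Finset.mem_val, hT, Finset.mem_image] at hE
    obtain ⟨m, hm, rfl⟩ := hE
    rw [Finset.mem_Icc] at hm
    exact ⟨m, hm.1, hm.2, rfl⟩
  · rintro ⟨m, hm1, hmN, rfl⟩
    exact hroot m hm1 hmN
end

section
/- Let t_L, t_R > 0 be real. For E ∈ ℂ, let β_+ and β_− denote the two roots (with multiplicity) of the quadratic t_L β² − E β + t_R. Then |β_+| = |β_−| if and only if E is real and |E| ≤ 2√(t_L t_R). Hence the set of E for which the two β-solutions of the Hatano–Nelson characteristic polynomial have equal modulus is exactly the real segment [−2√(t_L t_R), 2√(t_L t_R)] in ℂ. -/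
open Real Complex

/-- GBZ condition for the Hatano–Nelson model: the two roots `β₊, β₋` of
`t_L β² − E β + t_R` have equal modulus if and only if `E` is real with
`|E| ≤ 2√(t_L t_R)`, i.e. `E` lies on the real segment `[−2√(t_L t_R), 2√(t_L t_R)]`. -/
theorem hatanoNelson_gbz_condition (tL tR : ℝ) (htL : 0 < tL) (htR : 0 < tR)
    (E : ℂ) (βp βm : ℂ)
    (hfact : ∀ β : ℂ, (tL : ℂ) * β ^ 2 - E * β + (tR : ℂ) =
      (tL : ℂ) * (β - βp) * (β - βm)) :
    ‖βp‖ = ‖βm‖ ↔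
      (E.im = 0 ∧ |E.re| ≤ 2 * Real.sqrt (tL * tR)) := by
  have hE : E = (tL : ℂ) * (βp + βm) := by
    have h1 := hfact 1
    have h2 := hfact (-1)
    linear_combination (h2 - h1) / 2
  have hP : (tR : ℂ) = (tL : ℂ) * (βp * βm) := by
    linear_combination hfact 0
  have htL0 : (tL : ℂ) ≠ 0 := by exact_mod_cast htL.ne'
  have htR0 : (tR : ℂ) ≠ 0 := by exact_mod_cast htR.ne'
  have hβp0 : βp ≠ 0 := by
    intro h; apply htR0; rw [hP, h]; ring
  have hprod : βp * βm = ((tR / tL : ℝ) : ℂ) := by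
    push_cast
    field_simp
    linear_combination -hP
  have hEim := congrArg Complex.im hE
  have hEre := congrArg Complex.re hE
  simp [Complex.add_im, Complex.add_re, Complex.mul_im, Complex.mul_re] at hEim hEre
  have hPre := congrArg Complex.re hP
  simp [Complex.mul_re, Complex.mul_im] at hPre
  have hs : Real.sqrt (tL * tR) ^ 2 = tL * tR := Real.sq_sqrt (mul_pos htL htR).le
  have hs0 : 0 ≤ Real.sqrt (tL * tR) := Real.sqrt_nonneg _
  constructor
  · intro habs
    have h1 : ‖βp‖ * ‖βm‖ = tR / tL := by
      rw [← norm_mul, hprod, Complex.norm_real, Real.norm_eq_abs, abs_of_pos (div_pos htR htL)]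
    have hns : Complex.normSq βp = tR / tL := by
      have h2 := Complex.sq_norm βp
      rw [sq] at h2
      rw [← h2]
      nth_rewrite 2 [habs]
      exact h1
    have hconj : (starRingEnd ℂ) βp = βm := by
      have h1' : βp * (starRingEnd ℂ) βp = βp * βm := by
        rw [Complex.mul_conj, hprod, hns]
      exact mul_left_cancel₀ hβp0 h1'
    have hmre : βm.re = βp.re := by
      have := congrArg Complex.re hconj; simpa using this.symm
    have hmim : βm.im = -βp.im := by
      have := congrArg Complex.im hconj; simpa using this.symm
    constructor
    · rw [hEim, hmim]; ring
    · have hrsq : βp.re ^ 2 ≤ tR / tL := by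
        have h3 : Complex.normSq βp = βp.re ^ 2 + βp.im ^ 2 := by
          simp [Complex.normSq_apply]; ring
        nlinarith [sq_nonneg βp.im]
      have h5 : βp.re ^ 2 * tL ≤ tR := (le_div_iff₀ htL).mp hrsq
      have hEre2 : E.re = tL * (2 * βp.re) := by rw [hEre, hmre]; ring
      have h2 : E.re ^ 2 ≤ 4 * (tL * tR) := by
        rw [hEre2]
        nlinarith [h5, htL.le, mul_le_mul_of_nonneg_left h5 htL.le]
      nlinarith [abs_nonneg E.re, _root_.sq_abs E.re, hs, hs0, h2]
  · rintro ⟨him, hle⟩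
    have h2 : E.re ^ 2 ≤ 4 * (tL * tR) := by
      nlinarith [mul_self_le_mul_self (abs_nonneg E.re) hle, _root_.sq_abs E.re, hs, hs0]
    have hconjE : (starRingEnd ℂ) E = E := Complex.conj_eq_iff_im.mpr him
    have hroot : (tL : ℂ) * βp ^ 2 - E * βp + (tR : ℂ) = 0 := by
      linear_combination hfact βp
    have hcroot : (tL : ℂ) * ((starRingEnd ℂ) βp) ^ 2 - E * ((starRingEnd ℂ) βp)
        + (tR : ℂ) = 0 := by
      have := congrArg (starRingEnd ℂ) hroot
      simpa [map_sub, map_add, map_mul, map_pow, Complex.conj_ofReal, hconjE] using this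
    have hfc := hfact ((starRingEnd ℂ) βp)
    rw [hcroot] at hfc
    have hAB : ((starRingEnd ℂ) βp - βp) * ((starRingEnd ℂ) βp - βm) = 0 := by
      have h0 : (tL : ℂ) * (((starRingEnd ℂ) βp - βp) * ((starRingEnd ℂ) βp - βm)) = 0 := by
        linear_combination -hfc
      exact (mul_eq_zero.mp h0).resolve_left htL0
    rcases mul_eq_zero.mp hAB with h | h
    · -- βp is real, then βm real too, and they must be equal
      have hpim : βp.im = 0 := by
        have h' := congrArg Complex.im (sub_eq_zero.mp h)
        simp at h'
        linarith
      have hmim : βm.im = 0 := by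
        rw [hpim] at hEim
        have h4 : tL * βm.im = 0 := by linarith [hEim, him]
        exact (mul_eq_zero.mp h4).resolve_left htL.ne'
      have hre : βp.re = βm.re := by
        simp [hpim, hmim] at hPre
        have hE2 : E.re ^ 2 = tL ^ 2 * (βp.re + βm.re) ^ 2 := by rw [hEre]; ring
        have h6 : tL * tR = tL ^ 2 * (βp.re * βm.re) := by rw [hPre]; ring
        have key : tL ^ 2 * (βp.re - βm.re) ^ 2 ≤ 0 := by nlinarith [hE2, h2, h6]
        have hsq0 : (βp.re - βm.re) ^ 2 = 0 := by
          nlinarith [key, mul_pos htL htL, sq_nonneg (βp.re - βm.re)]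
        have := pow_eq_zero_iff (n := 2) (by norm_num) |>.mp hsq0
        linarith
      have : βp = βm := Complex.ext hre (by rw [hpim, hmim])
      rw [this]
    · have hc : (starRingEnd ℂ) βp = βm := sub_eq_zero.mp h
      rw [← hc, Complex.norm_conj]
end

section
/- Let t_L, t_R > 0 be real and E ∈ ℂ. Let β_1, β_2 be the two roots of t_L β² − E β + t_R ordered so that |β_1| ≤ |β_2|, and suppose R > 0 satisfies |β_1| < R < |β_2|. Then (1/(2π)) ∫_0^{2π} log| t_L R e^{iθ} + t_R R^{−1} e^{−iθ} − E | dθ = log(t_L) + log|β_2|. -/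
open Real Complex intervalIntegral

open Metric MeasureTheory

lemma aux_ne (w : ℂ) (hw : ‖w‖ < 1) (θ : ℝ) :
    1 - w * Complex.exp (θ * Complex.I) ≠ 0 := by
  intro h
  have h1 : ‖w * Complex.exp (θ * Complex.I)‖ < 1 := by
    rw [norm_mul, Complex.norm_exp_ofReal_mul_I, mul_one]; exact hw
  have : w * Complex.exp (θ * Complex.I) = 1 := by
    have := sub_eq_zero.mp h; linear_combination -this
  rw [this] at h1; simp at h1

lemma aux_cont (w : ℂ) (hw : ‖w‖ < 1) :
    Continuous fun θ : ℝ => Real.log (‖1 - w * Complex.exp (θ * Complex.I)‖) := by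
  apply Continuous.log
  · exact continuous_norm.comp (by continuity)
  · intro θ
    exact norm_ne_zero_iff.mpr (aux_ne w hw θ)

lemma aux_mean (w : ℂ) (hw : ‖w‖ < 1) :
    ∫ θ in (0:ℝ)..(2*π),
      Real.log (‖1 - w * Complex.exp (θ * Complex.I)‖) = 0 := by
  set f : ℂ → ℂ := fun z => Complex.log (1 - w * z) with hfdef
  have hslit : ∀ z ∈ closedBall (0:ℂ) 1, 1 - w * z ∈ Complex.slitPlane := by
    intro z hz
    rw [Complex.mem_slitPlane_iff]
    left
    have h1 : ‖w * z‖ < 1 := by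
      calc ‖w * z‖ = ‖w‖ * ‖z‖ := norm_mul _ _
        _ ≤ ‖w‖ * 1 := by
            exact mul_le_mul_of_nonneg_left (by simpa [Complex.dist_eq] using hz) (norm_nonneg w)
        _ < 1 := by simpa using hw
    have h2 : (w * z).re ≤ ‖w * z‖ := Complex.re_le_norm _
    simp only [Complex.sub_re, Complex.one_re]
    linarith
  have hdiff : DifferentiableOn ℂ f (closedBall 0 1) := by
    intro z hz
    exact (((differentiableAt_const (1:ℂ)).sub
      ((differentiableAt_const w).mul differentiableAt_id)).clog (hslit z hz)).differentiableWithinAt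
  have key := hdiff.circleIntegral_sub_inv_smul (mem_ball_self one_pos)
  have hf0 : f 0 = 0 := by simp [hfdef]
  rw [hf0, smul_zero, circleIntegral] at key
  have key2 : ∫ θ in (0:ℝ)..(2*π), Complex.I * f (Complex.exp (θ * Complex.I)) = 0 := by
    rw [← key]
    apply intervalIntegral.integral_congr
    intro θ _
    have h := Complex.exp_ne_zero (θ * Complex.I)
    simp only [deriv_circleMap, circleMap_zero, sub_zero, smul_eq_mul, one_mul, Complex.ofReal_one]
    field_simp
  have hcont : Continuous fun θ : ℝ => f (Complex.exp (θ * Complex.I)) := by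
    rw [continuous_iff_continuousAt]
    intro θ
    apply ContinuousAt.clog
    · fun_prop
    · exact hslit _ (by simp [Complex.norm_exp_ofReal_mul_I, Complex.dist_eq])
  have hint : IntervalIntegrable (fun θ : ℝ => f (Complex.exp (θ * Complex.I)))
      MeasureTheory.volume 0 (2*π) := hcont.intervalIntegrable _ _
  rw [intervalIntegral.integral_const_mul] at key2
  have key3 : ∫ θ in (0:ℝ)..(2*π), f (Complex.exp (θ * Complex.I)) = 0 := by
    rcases mul_eq_zero.mp key2 with h | h
    · exact absurd h Complex.I_ne_zero
    · exact h
  have key4 := Complex.reCLM.intervalIntegral_comp_comm hint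
  rw [key3] at key4
  have : ∀ θ : ℝ, Complex.reCLM (f (Complex.exp (θ * Complex.I))) =
      Real.log (‖1 - w * Complex.exp (θ * Complex.I)‖) := by
    intro θ
    simp [hfdef, Complex.log_re]
  calc ∫ θ in (0:ℝ)..(2*π), Real.log (‖1 - w * Complex.exp (θ * Complex.I)‖)
      = ∫ θ in (0:ℝ)..(2*π), Complex.reCLM (f (Complex.exp (θ * Complex.I))) := by
        apply intervalIntegral.integral_congr; intro θ _
        simpa using (this θ).symm
    _ = 0 := by rw [key4]; simp

lemma aux_cont2 (a : ℂ) (R : ℝ) (hR : 0 < R) (hne : ‖a‖ ≠ R) :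
    Continuous fun θ : ℝ =>
      Real.log (‖(R:ℂ) * Complex.exp (θ * Complex.I) - a‖) := by
  apply Continuous.log
  · exact continuous_norm.comp (by continuity)
  · intro θ
    apply norm_ne_zero_iff.mpr
    intro h
    have h2 : (R:ℂ) * Complex.exp (θ * Complex.I) = a := sub_eq_zero.mp h
    apply hne
    rw [← h2, norm_mul, Complex.norm_exp_ofReal_mul_I, mul_one, Complex.norm_real, Real.norm_eq_abs,
      abs_of_pos hR]

lemma aux_lt (a : ℂ) (R : ℝ) (hR : 0 < R) (ha : ‖a‖ < R) :
    ∫ θ in (0:ℝ)..(2*π),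
      Real.log (‖(R:ℂ) * Complex.exp (θ * Complex.I) - a‖) =
      2 * π * Real.log R := by
  set w : ℂ := (starRingEnd ℂ) a / R with hwdef
  have hw : ‖w‖ < 1 := by
    rw [hwdef, norm_div, Complex.norm_conj, Complex.norm_real, Real.norm_eq_abs, abs_of_pos hR,
      div_lt_one hR]
    exact ha
  have hpt : ∀ θ : ℝ, ‖(R:ℂ) * Complex.exp (θ * Complex.I) - a‖ =
      R * ‖1 - w * Complex.exp (θ * Complex.I)‖ := by
    intro θ
    set z := Complex.exp (θ * Complex.I) with hzdef
    have hz : z ≠ 0 := Complex.exp_ne_zero _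
    have hcz : (starRingEnd ℂ) z = z⁻¹ := by
      rw [hzdef, ← Complex.exp_conj, ← Complex.exp_neg]
      congr 1
      simp [Complex.conj_I]
    have key : (R:ℂ) * z - a = (starRingEnd ℂ) (1 - w * z) * ((R:ℂ) * z) := by
      rw [map_sub, map_one, map_mul, hwdef, map_div₀, Complex.conj_conj,
        Complex.conj_ofReal, hcz]
      have hRne : (R:ℂ) ≠ 0 := Complex.ofReal_ne_zero.mpr (ne_of_gt hR)
      field_simp
    rw [key, norm_mul, Complex.norm_conj, norm_mul, Complex.norm_exp_ofReal_mul_I,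
      mul_one, Complex.norm_real, Real.norm_eq_abs, abs_of_pos hR]
    ring
  have hsplit : ∀ θ : ℝ, Real.log (‖(R:ℂ) * Complex.exp (θ * Complex.I) - a‖) =
      Real.log R + Real.log (‖1 - w * Complex.exp (θ * Complex.I)‖) := by
    intro θ
    rw [hpt θ, Real.log_mul (ne_of_gt hR) (norm_ne_zero_iff.mpr (aux_ne w hw θ))]
  rw [intervalIntegral.integral_congr (g := fun θ : ℝ =>
      Real.log R + Real.log (‖1 - w * Complex.exp (θ * Complex.I)‖))
      (fun θ _ => hsplit θ),
    intervalIntegral.integral_add (intervalIntegrable_const)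
      ((aux_cont w hw).intervalIntegrable _ _),
    aux_mean w hw, intervalIntegral.integral_const]
  simp [mul_comm]

lemma aux_gt (a : ℂ) (R : ℝ) (hR : 0 < R) (ha : R < ‖a‖) :
    ∫ θ in (0:ℝ)..(2*π),
      Real.log (‖(R:ℂ) * Complex.exp (θ * Complex.I) - a‖) =
      2 * π * Real.log (‖a‖) := by
  have ha0 : a ≠ 0 := by
    intro h; rw [h] at ha; simp at ha; linarith
  set w : ℂ := (R:ℂ) / a with hwdef
  have hw : ‖w‖ < 1 := by
    rw [hwdef, norm_div, Complex.norm_real, Real.norm_eq_abs, abs_of_pos hR,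
      div_lt_one (hR.trans ha)]
    exact ha
  have hpt : ∀ θ : ℝ, ‖(R:ℂ) * Complex.exp (θ * Complex.I) - a‖ =
      ‖a‖ * ‖1 - w * Complex.exp (θ * Complex.I)‖ := by
    intro θ
    have key : (R:ℂ) * Complex.exp (θ * Complex.I) - a =
        (-a) * (1 - w * Complex.exp (θ * Complex.I)) := by
      rw [hwdef]; field_simp; ring
    rw [key, norm_mul, norm_neg]
  have hsplit : ∀ θ : ℝ, Real.log (‖(R:ℂ) * Complex.exp (θ * Complex.I) - a‖) =
      Real.log (‖a‖) + Real.log (‖1 - w * Complex.exp (θ * Complex.I)‖) := by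
    intro θ
    rw [hpt θ, Real.log_mul (norm_ne_zero_iff.mpr ha0) (norm_ne_zero_iff.mpr (aux_ne w hw θ))]
  rw [intervalIntegral.integral_congr (g := fun θ : ℝ =>
      Real.log (‖a‖) + Real.log (‖1 - w * Complex.exp (θ * Complex.I)‖))
      (fun θ _ => hsplit θ),
    intervalIntegral.integral_add (intervalIntegrable_const)
      ((aux_cont w hw).intervalIntegrable _ _),
    aux_mean w hw, intervalIntegral.integral_const]
  simp [mul_comm]

/-- For the Hatano–Nelson model `H(β) = t_L β + t_R β⁻¹`, if the roots of
`t_L β² − E β + t_R` satisfy `|β₁| ≤ |β₂|` and `|β₁| < R < |β₂|`, then the Coulomb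
potential generated at `E` by the rescaled spectral loop `H(R e^{iθ})` equals
`log t_L + log|β₂|`. -/
theorem hatanoNelson_potential_local_form (tL tR : ℝ) (htL : 0 < tL) (htR : 0 < tR)
    (E : ℂ) (β₁ β₂ : ℂ)
    (hfact : ∀ β : ℂ, (tL : ℂ) * β ^ 2 - E * β + (tR : ℂ) =
      (tL : ℂ) * (β - β₁) * (β - β₂))
    (hord : ‖β₁‖ ≤ ‖β₂‖)
    (R : ℝ) (hR : 0 < R)
    (hR₁ : ‖β₁‖ < R) (hR₂ : R < ‖β₂‖) :
    (1 / (2 * π)) * ∫ θ in (0 : ℝ)..(2 * π),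
        Real.log (‖
          ((tL : ℂ) * ((R : ℂ) * Complex.exp (θ * Complex.I)) +
            (tR : ℂ) * ((R : ℂ))⁻¹ * Complex.exp (-(θ * Complex.I)) - E)‖) =
      Real.log tL + Real.log ‖β₂‖ := by
  have hRne : (R:ℂ) ≠ 0 := Complex.ofReal_ne_zero.mpr (ne_of_gt hR)
  have htLne : (tL:ℂ) ≠ 0 := Complex.ofReal_ne_zero.mpr (ne_of_gt htL)
  have habs : ∀ θ : ℝ, ‖(R:ℂ) * Complex.exp (θ * Complex.I)‖ = R := by
    intro θ
    rw [norm_mul, Complex.norm_exp_ofReal_mul_I, mul_one, Complex.norm_real, Real.norm_eq_abs, abs_of_pos hR]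
  have hne1 : ∀ θ : ℝ, (R:ℂ) * Complex.exp (θ * Complex.I) - β₁ ≠ 0 := by
    intro θ h
    have h2 := sub_eq_zero.mp h
    rw [← h2, habs θ] at hR₁
    exact lt_irrefl _ hR₁
  have hne2 : ∀ θ : ℝ, (R:ℂ) * Complex.exp (θ * Complex.I) - β₂ ≠ 0 := by
    intro θ h
    have h2 := sub_eq_zero.mp h
    rw [← h2, habs θ] at hR₂
    exact lt_irrefl _ hR₂
  have hpt : ∀ θ : ℝ,
      Real.log (‖(tL : ℂ) * ((R : ℂ) * Complex.exp (θ * Complex.I)) +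
            (tR : ℂ) * ((R : ℂ))⁻¹ * Complex.exp (-(θ * Complex.I)) - E‖) =
      (Real.log tL - Real.log R) +
        (Real.log (‖(R:ℂ) * Complex.exp (θ * Complex.I) - β₁‖) +
         Real.log (‖(R:ℂ) * Complex.exp (θ * Complex.I) - β₂‖)) := by
    intro θ
    set z := Complex.exp (θ * Complex.I) with hzdef
    have hz : z ≠ 0 := Complex.exp_ne_zero _
    have hexpneg : Complex.exp (-(θ * Complex.I)) = z⁻¹ := by
      rw [hzdef, ← Complex.exp_neg]
    have key : (tL : ℂ) * ((R : ℂ) * z) + (tR : ℂ) * ((R : ℂ))⁻¹ * z⁻¹ - E =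
        ((R:ℂ) * z)⁻¹ * ((tL:ℂ) * ((R:ℂ)*z - β₁) * ((R:ℂ)*z - β₂)) := by
      rw [← hfact ((R:ℂ)*z)]
      field_simp
      ring
    rw [hexpneg, key, norm_mul, norm_mul, norm_mul, norm_inv, habs θ,
      Complex.norm_real, Real.norm_eq_abs, abs_of_pos htL]
    rw [Real.log_mul (by positivity)
        (mul_ne_zero (mul_ne_zero (ne_of_gt htL) (norm_ne_zero_iff.mpr (hne1 θ)))
          (norm_ne_zero_iff.mpr (hne2 θ))),
      Real.log_inv,
      Real.log_mul (mul_ne_zero (ne_of_gt htL) (norm_ne_zero_iff.mpr (hne1 θ)))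
        (norm_ne_zero_iff.mpr (hne2 θ)),
      Real.log_mul (ne_of_gt htL) (norm_ne_zero_iff.mpr (hne1 θ))]
    ring
  rw [intervalIntegral.integral_congr (g := fun θ : ℝ =>
      (Real.log tL - Real.log R) +
        (Real.log (‖(R:ℂ) * Complex.exp (θ * Complex.I) - β₁‖) +
         Real.log (‖(R:ℂ) * Complex.exp (θ * Complex.I) - β₂‖)))
      (fun θ _ => hpt θ),
    intervalIntegral.integral_add intervalIntegrable_const
      (((aux_cont2 β₁ R hR (ne_of_lt hR₁)).intervalIntegrable _ _).add
        ((aux_cont2 β₂ R hR (ne_of_gt hR₂)).intervalIntegrable _ _)),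
    intervalIntegral.integral_add ((aux_cont2 β₁ R hR (ne_of_lt hR₁)).intervalIntegrable _ _)
      ((aux_cont2 β₂ R hR (ne_of_gt hR₂)).intervalIntegrable _ _),
    aux_lt β₁ R hR hR₁, aux_gt β₂ R hR hR₂, intervalIntegral.integral_const]
  have hπ : (2:ℝ) * π ≠ 0 := by positivity
  field_simp
  ring
end

section
/- Let t_L, t_R > 0 be real. Define Φ : ℂ → ℝ by Φ(z) = log(t_L) + log( max{ |β| : β ∈ ℂ, t_L β² − z β + t_R = 0 } ). Then for every real E with |E| < 2√(t_L t_R), lim_{ε→0⁺} ( Φ(E + iε) + Φ(E − iε) − 2Φ(E) ) / ε = 2 / √(4 t_L t_R − E²). -/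
open Real Complex Filter Topology

/-- The local potential function of the Hatano–Nelson model:
`Φ(z) = log t_L + log (max{|β| : t_L β² − z β + t_R = 0})`. -/
noncomputable def hnPotential (tL tR : ℝ) (z : ℂ) : ℝ :=
  Real.log tL +
    Real.log (sSup ((fun β : ℂ => ‖β‖) '' {β : ℂ | (tL : ℂ) * β ^ 2 - z * β + (tR : ℂ) = 0}))



lemma maxsq (a b : ℝ) (ha : 0 ≤ a) (hb : 0 ≤ b) :
    (max a b)^2 = (a^2 + b^2 + Real.sqrt ((a^2+b^2)^2 - (2*a*b)^2))/2 := by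
  have h : (a^2+b^2)^2 - (2*a*b)^2 = (a^2-b^2)^2 := by ring
  rw [h, Real.sqrt_sq_eq_abs]
  rcases le_total a b with h1 | h1
  · rw [max_eq_right h1, _root_.abs_of_nonpos (by nlinarith)]; ring
  · rw [max_eq_left h1, _root_.abs_of_nonneg (by nlinarith)]; ring

noncomputable def Ssum (tL tR : ℝ) (z : ℂ) : ℝ :=
  (‖z‖ ^ 2 + ‖z^2 - 4*tL*tR‖) / (2*tL^2)

lemma potential_formula (tL tR : ℝ) (htL : 0 < tL) (htR : 0 < tR) (z : ℂ) :
    hnPotential tL tR z =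
      Real.log tL + (1/2) * Real.log
        ((Ssum tL tR z + Real.sqrt ((Ssum tL tR z)^2 - (2*(tR/tL))^2))/2) := by
  have htL0 : (tL:ℂ) ≠ 0 := by exact_mod_cast htL.ne'
  set w : ℂ := (z^2 - 4*tL*tR) ^ ((2:ℕ):ℂ)⁻¹ with hwdef
  have hw : w^2 = z^2 - 4*tL*tR := Complex.cpow_nat_inv_pow _ (by norm_num)
  set r₁ : ℂ := (z + w)/(2*tL) with hr1
  set r₂ : ℂ := (z - w)/(2*tL) with hr2
  have h2tL : (2*(tL:ℂ)) ≠ 0 := by simp [htL0]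
  have h4 : ∀ β : ℂ, (2*(tL:ℂ)*β - (z+w)) * (2*tL*β - (z-w))
      = 4*tL*((tL:ℂ)*β^2 - z*β + tR) := by
    intro β; linear_combination -hw
  have factor : ∀ β : ℂ, (tL:ℂ) * β ^ 2 - z * β + tR = 0 ↔ β = r₁ ∨ β = r₂ := by
    intro β
    constructor
    · intro h
      have h0 : (2*(tL:ℂ)*β - (z+w)) * (2*tL*β - (z-w)) = 0 := by rw [h4, h, mul_zero]
      rcases mul_eq_zero.mp h0 with h' | h'
      · left; rw [hr1, eq_div_iff h2tL]; linear_combination h'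
      · right; rw [hr2, eq_div_iff h2tL]; linear_combination h'
    · intro h
      have h0 : (2*(tL:ℂ)*β - (z+w)) * (2*tL*β - (z-w)) = 0 := by
        rcases h with h | h <;> subst h
        · apply mul_eq_zero.mpr; left; rw [hr1]; field_simp; ring
        · apply mul_eq_zero.mpr; right; rw [hr2]; field_simp; ring
      have := (h4 β) ▸ h0
      rcases mul_eq_zero.mp this with h' | h'
      · exact absurd h' (by norm_num [htL0])
      · exact h'
  have hset : {β : ℂ | (tL : ℂ) * β ^ 2 - z * β + (tR : ℂ) = 0} = {r₁, r₂} := by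
    ext β; simp only [Set.mem_setOf_eq, Set.mem_insert_iff, Set.mem_singleton_iff]
    exact factor β
  have hprodC : r₁ * r₂ = (tR:ℂ)/tL := by
    rw [hr1, hr2]; field_simp; linear_combination -hw
  have hprod : ‖r₁‖ * ‖r₂‖ = tR/tL := by
    rw [← norm_mul, hprodC]
    rw [norm_div, Complex.norm_real, Complex.norm_real, Real.norm_eq_abs, Real.norm_eq_abs,
      abs_of_pos htR, abs_of_pos htL]
  have hwsq : ‖w‖ ^ 2 = ‖z^2 - 4*tL*tR‖ := by
    rw [← norm_pow, hw]
  have hsum : ‖r₁‖ ^ 2 + ‖r₂‖ ^ 2 = Ssum tL tR z := by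
    rw [Ssum, ← hwsq]
    rw [hr1, hr2, norm_div, norm_div, div_pow, div_pow]
    have habs2 : ‖2*(tL:ℂ)‖ = 2*tL := by
      rw [norm_mul, Complex.norm_two, Complex.norm_real, Real.norm_eq_abs, abs_of_pos htL]
    rw [habs2]
    have hpar : ‖z+w‖ ^ 2 + ‖z-w‖ ^ 2
        = 2 * (‖z‖ ^ 2 + ‖w‖ ^ 2) := by
      simp only [Complex.sq_norm]
      rw [Complex.normSq_add, Complex.normSq_sub]; ring
    field_simp
    linear_combination hpar
  have hpos : 0 < ‖r₁‖ * ‖r₂‖ := by rw [hprod]; positivity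
  have h1 : 0 < ‖r₁‖ := by
    nlinarith [norm_nonneg r₁, norm_nonneg r₂]
  have hmax : 0 < max (‖r₁‖) (‖r₂‖) := lt_max_of_lt_left h1
  rw [hnPotential, hset, Set.image_pair, csSup_pair]
  congr 1
  have habmul : 2 * ‖r₁‖ * ‖r₂‖ = 2*(tR/tL) := by
    rw [mul_assoc, hprod]
  have := maxsq (‖r₁‖) (‖r₂‖) (norm_nonneg _) (norm_nonneg _)
  rw [hsum, habmul] at this
  rw [← this]
  rw [Real.log_pow]
  push_cast
  ring


noncomputable def Rv (tL tR E ε : ℝ) : ℝ :=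
  Real.sqrt ((E^2 - ε^2 - 4*tL*tR)^2 + (2*E*ε)^2)

noncomputable def Sv (tL tR E ε : ℝ) : ℝ := (E^2 + ε^2 + Rv tL tR E ε)/(2*tL^2)

noncomputable def qv (tL tR E ε : ℝ) : ℝ :=
  (1 + (2*(4*tL*tR - E^2) + ε^2 + 4*E^2)/(Rv tL tR E ε + (4*tL*tR - E^2)))/(2*tL^2)

noncomputable def gv (tL tR E ε : ℝ) : ℝ :=
  (ε * qv tL tR E ε +
    Real.sqrt (qv tL tR E ε) * Real.sqrt (Sv tL tR E ε + 2*(tR/tL)))/2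

lemma Rv_nonneg (tL tR E ε : ℝ) : 0 ≤ Rv tL tR E ε := Real.sqrt_nonneg _

lemma Rv_sq (tL tR E ε : ℝ) :
    (Rv tL tR E ε)^2 = (E^2 - ε^2 - 4*tL*tR)^2 + (2*E*ε)^2 :=
  Real.sq_sqrt (by positivity)

lemma Rv_cont (tL tR E : ℝ) : Continuous (fun ε => Rv tL tR E ε) := by
  unfold Rv; fun_prop

lemma Rv_zero (tL tR E : ℝ) (hm : 0 < 4*tL*tR - E^2) :
    Rv tL tR E 0 = 4*tL*tR - E^2 := by
  unfold Rv
  rw [show (E^2 - 0^2 - 4*tL*tR)^2 + (2*E*0)^2 = (4*tL*tR - E^2)^2 by ring,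
    Real.sqrt_sq hm.le]

lemma hRm_pos (tL tR E ε : ℝ) (hm : 0 < 4*tL*tR - E^2) :
    0 < Rv tL tR E ε + (4*tL*tR - E^2) := by
  have := Rv_nonneg tL tR E ε; linarith

lemma S_sub (tL tR E ε : ℝ) (htL : 0 < tL) (hm : 0 < 4*tL*tR - E^2) :
    Sv tL tR E ε - 2*(tR/tL) = ε^2 * qv tL tR E ε := by
  have hRm := hRm_pos tL tR E ε hm
  have hsq := Rv_sq tL tR E ε
  have h2 : (Rv tL tR E ε - (4*tL*tR - E^2)) * (Rv tL tR E ε + (4*tL*tR - E^2))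
      = ε^2 * (2*(4*tL*tR - E^2) + ε^2 + 4*E^2) := by linear_combination hsq
  have hne : Rv tL tR E ε + (tL*tR*4 - E^2) ≠ 0 := by linarith
  unfold Sv qv
  field_simp
  linear_combination h2

lemma q_pos (tL tR E ε : ℝ) (htL : 0 < tL) (hm : 0 < 4*tL*tR - E^2) :
    0 < qv tL tR E ε := by
  have hRm := hRm_pos tL tR E ε hm
  have h1 : 0 < (2*(4*tL*tR - E^2) + ε^2 + 4*E^2)/(Rv tL tR E ε + (4*tL*tR - E^2)) :=
    div_pos (by nlinarith) hRm
  unfold qv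
  have h2 : (0:ℝ) < 1 + (2*(4*tL*tR - E^2) + ε^2 + 4*E^2)/(Rv tL tR E ε + (4*tL*tR - E^2)) := by
    linarith
  positivity

lemma f_eq (tL tR E ε : ℝ) (htL : 0 < tL) (hm : 0 < 4*tL*tR - E^2) (hε : 0 ≤ ε) :
    (Sv tL tR E ε + Real.sqrt ((Sv tL tR E ε)^2 - (2*(tR/tL))^2))/2
      = tR/tL + ε * gv tL tR E ε := by
  have hq := q_pos tL tR E ε htL hm
  have hs := S_sub tL tR E ε htL hm
  have h1 : (Sv tL tR E ε)^2 - (2*(tR/tL))^2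
      = (Sv tL tR E ε - 2*(tR/tL)) * (Sv tL tR E ε + 2*(tR/tL)) := by ring
  rw [h1, Real.sqrt_mul (by rw [hs]; positivity), hs,
    Real.sqrt_mul (sq_nonneg ε), Real.sqrt_sq hε]
  unfold gv; linear_combination (1/2) * hs

lemma Sv_zero (tL tR E : ℝ) (htL : 0 < tL) (hm : 0 < 4*tL*tR - E^2) :
    Sv tL tR E 0 = 2*(tR/tL) := by
  unfold Sv; rw [Rv_zero tL tR E hm]; field_simp; ring

lemma gv_zero (tL tR E : ℝ) (htL : 0 < tL) (htR : 0 < tR) (hm : 0 < 4*tL*tR - E^2) :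
    gv tL tR E 0 = 2*(tR/tL)/Real.sqrt (4*tL*tR - E^2) := by
  have hS0 := Sv_zero tL tR E htL hm
  have hq0 : qv tL tR E 0 = 4*tR/(tL*(4*tL*tR - E^2)) := by
    unfold qv; rw [Rv_zero tL tR E hm]; rw [show (0:ℝ)^2 = 0 by ring]
    field_simp; ring
  unfold gv
  rw [hS0, hq0, ← Real.sqrt_mul (by positivity)]
  have key : 4*tR/(tL*(4*tL*tR - E^2)) * (2*(tR/tL) + 2*(tR/tL))
      = (4*(tR/tL)/Real.sqrt (4*tL*tR - E^2))^2 := by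
    rw [div_pow, Real.sq_sqrt hm.le]; field_simp; ring
  rw [key, Real.sqrt_sq (by positivity)]
  ring

lemma gv_contAt (tL tR E : ℝ) (hm : 0 < 4*tL*tR - E^2) :
    ContinuousAt (fun ε => gv tL tR E ε) 0 := by
  have hRc := Rv_cont tL tR E
  have hRm := hRm_pos tL tR E 0 hm
  have hqc : ContinuousAt (fun ε => qv tL tR E ε) 0 := by
    unfold qv
    apply ContinuousAt.div_const
    apply continuousAt_const.add
    exact ContinuousAt.div (by fun_prop) (by fun_prop) hRm.ne'
  have hSc : ContinuousAt (fun ε => Sv tL tR E ε) 0 := by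
    unfold Sv; fun_prop
  unfold gv
  apply ContinuousAt.div_const
  apply ContinuousAt.add
  · exact continuousAt_id.mul hqc
  · exact ((Real.continuous_sqrt.continuousAt).comp hqc).mul
      ((Real.continuous_sqrt.continuousAt).comp (hSc.add continuousAt_const))

lemma Ssum_plus (tL tR E ε : ℝ) :
    Ssum tL tR ((E:ℂ) + (ε:ℂ)*Complex.I) = Sv tL tR E ε := by
  unfold Ssum Sv Rv
  have h1 : ‖(E:ℂ) + (ε:ℂ)*Complex.I‖ ^ 2 = E^2 + ε^2 := by
    rw [Complex.norm_add_mul_I, Real.sq_sqrt (by positivity)]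
  have h2 : ((E:ℂ) + (ε:ℂ)*Complex.I)^2 - 4*tL*tR
      = ((E^2 - ε^2 - 4*tL*tR : ℝ):ℂ) + ((2*E*ε : ℝ):ℂ)*Complex.I := by
    push_cast
    linear_combination (ε:ℂ)^2 * Complex.I_sq
  rw [h1, h2, Complex.norm_add_mul_I]

lemma Ssum_minus (tL tR E ε : ℝ) :
    Ssum tL tR ((E:ℂ) - (ε:ℂ)*Complex.I) = Sv tL tR E ε := by
  have h0 : (E:ℂ) - (ε:ℂ)*Complex.I = (E:ℂ) + ((-ε : ℝ):ℂ)*Complex.I := by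
    push_cast; ring
  rw [h0, Ssum_plus]
  unfold Sv Rv
  rw [show (E^2 - (-ε)^2 - 4*tL*tR)^2 + (2*E*(-ε))^2
      = (E^2 - ε^2 - 4*tL*tR)^2 + (2*E*ε)^2 by ring,
    show (-ε)^2 = ε^2 by ring]

lemma Ssum_real (tL tR E : ℝ) : Ssum tL tR (E:ℂ) = Sv tL tR E 0 := by
  unfold Ssum Sv Rv
  have h1 : ‖(E:ℂ)‖ ^ 2 = E^2 := by
    rw [Complex.norm_real, Real.norm_eq_abs, _root_.sq_abs]
  have h2 : ((E:ℂ)^2 - 4*tL*tR) = ((E^2 - 4*tL*tR : ℝ):ℂ) := by push_cast; ring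
  rw [h1, h2, Complex.norm_real, Real.norm_eq_abs,
    show (E^2 - 0^2 - 4*tL*tR)^2 + (2*E*0)^2 = (E^2 - 4*tL*tR)^2 by ring,
    Real.sqrt_sq_eq_abs, show (0:ℝ)^2 = 0 by ring, add_zero]


/-- For `E` in the open spectral segment `(−2√(t_L t_R), 2√(t_L t_R))`, the sum of the
two one-sided normal derivatives of the potential `Φ` across the segment equals
`2/√(4 t_L t_R − E²)`; dividing by `2π` gives the linear density of states. -/
theorem hatanoNelson_linear_dos (tL tR : ℝ) (htL : 0 < tL) (htR : 0 < tR)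
    (E : ℝ) (hE : |E| < 2 * Real.sqrt (tL * tR)) :
    Tendsto (fun ε : ℝ =>
        (hnPotential tL tR ((E : ℂ) + ε * Complex.I) +
          hnPotential tL tR ((E : ℂ) - ε * Complex.I) -
          2 * hnPotential tL tR (E : ℂ)) / ε)
      (𝓝[>] 0)
      (𝓝 (2 / Real.sqrt (4 * tL * tR - E ^ 2))) := by
  have hm : 0 < 4 * tL * tR - E ^ 2 := by
    nlinarith [hE, Real.sq_sqrt (mul_nonneg htL.le htR.le), _root_.sq_abs E,
      abs_nonneg E, Real.sqrt_nonneg (tL*tR)]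
  have hP : 0 < tR / tL := div_pos htR htL
  have hφ0 : hnPotential tL tR (E:ℂ) = Real.log tL + (1/2) * Real.log (tR/tL) := by
    rw [potential_formula tL tR htL htR, Ssum_real, Sv_zero tL tR E htL hm]
    have h : (2*(tR/tL) + Real.sqrt ((2*(tR/tL))^2 - (2*(tR/tL))^2))/2 = tR/tL := by
      rw [sub_self, Real.sqrt_zero]; ring
    rw [h]
  have hφp : ∀ ε : ℝ, 0 ≤ ε → hnPotential tL tR ((E:ℂ) + (ε:ℂ)*Complex.I)
      = Real.log tL + (1/2) * Real.log (tR/tL + ε * gv tL tR E ε) := by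
    intro ε hε
    rw [potential_formula tL tR htL htR, Ssum_plus, f_eq tL tR E ε htL hm hε]
  have hφm : ∀ ε : ℝ, 0 ≤ ε → hnPotential tL tR ((E:ℂ) - (ε:ℂ)*Complex.I)
      = Real.log tL + (1/2) * Real.log (tR/tL + ε * gv tL tR E ε) := by
    intro ε hε
    rw [potential_formula tL tR htL htR, Ssum_minus, f_eq tL tR E ε htL hm hε]
  have heq : ∀ᶠ ε in 𝓝[>](0:ℝ),
      (Real.log (tR/tL + ε * gv tL tR E ε) - Real.log (tR/tL))/ε
      = (hnPotential tL tR ((E : ℂ) + ε * Complex.I) +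
          hnPotential tL tR ((E : ℂ) - ε * Complex.I) -
          2 * hnPotential tL tR (E : ℂ)) / ε := by
    filter_upwards [self_mem_nhdsWithin] with ε hε
    rw [hφp ε (le_of_lt hε), hφm ε (le_of_lt hε), hφ0]
    ring
  have hgt : Tendsto (fun ε => gv tL tR E ε) (𝓝[>](0:ℝ))
      (𝓝 (2*(tR/tL)/Real.sqrt (4*tL*tR - E^2))) := by
    have h := (gv_contAt tL tR E hm).tendsto
    rw [gv_zero tL tR E htL htR hm] at h
    exact h.mono_left nhdsWithin_le_nhds
  have hgpos : ∀ᶠ ε in 𝓝[>](0:ℝ), 0 < gv tL tR E ε :=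
    hgt.eventually (eventually_gt_nhds (by positivity))
  have hu : Tendsto (fun ε : ℝ => tR/tL + ε * gv tL tR E ε) (𝓝[>](0:ℝ))
      (𝓝[≠] (tR/tL)) := by
    rw [tendsto_nhdsWithin_iff]
    constructor
    · have hid : Tendsto (fun ε : ℝ => ε) (𝓝[>](0:ℝ)) (𝓝 0) :=
        tendsto_id.mono_left nhdsWithin_le_nhds
      have h0 : Tendsto (fun ε : ℝ => ε * gv tL tR E ε) (𝓝[>](0:ℝ)) (𝓝 0) := by
        have := hid.mul hgt
        rwa [zero_mul] at this
      have := tendsto_const_nhds (x := tR/tL) (f := 𝓝[>](0:ℝ)) |>.add h0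
      rwa [add_zero] at this
    · filter_upwards [self_mem_nhdsWithin, hgpos] with ε h1 h2
      have : 0 < ε * gv tL tR E ε := mul_pos h1 h2
      simp only [Set.mem_compl_iff, Set.mem_singleton_iff]
      intro hcon
      nlinarith
  have hslope := hasDerivAt_iff_tendsto_slope.mp (Real.hasDerivAt_log hP.ne')
  have hcomp := hslope.comp hu
  have hmul := hcomp.mul hgt
  have heq2 : ∀ᶠ ε in 𝓝[>](0:ℝ),
      (slope Real.log (tR/tL) ∘ fun ε : ℝ => tR/tL + ε * gv tL tR E ε) ε * gv tL tR E ε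
      = (Real.log (tR/tL + ε * gv tL tR E ε) - Real.log (tR/tL))/ε := by
    filter_upwards [self_mem_nhdsWithin, hgpos] with ε h1 h2
    have hε0 : (ε:ℝ) ≠ 0 := ne_of_gt h1
    have hg0 : gv tL tR E ε ≠ 0 := ne_of_gt h2
    simp only [Function.comp_apply, slope_def_field]
    rw [show tR/tL + ε * gv tL tR E ε - tR/tL = ε * gv tL tR E ε by ring]
    field_simp
  have hlim : Tendsto (fun ε : ℝ =>
      (Real.log (tR/tL + ε * gv tL tR E ε) - Real.log (tR/tL))/ε)
      (𝓝[>](0:ℝ)) (𝓝 ((tR/tL)⁻¹ * (2*(tR/tL)/Real.sqrt (4*tL*tR - E^2)))) :=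
    hmul.congr' heq2
  have hval : (tR/tL)⁻¹ * (2*(tR/tL)/Real.sqrt (4*tL*tR - E^2))
      = 2 / Real.sqrt (4*tL*tR - E^2) := by
    field_simp
  rw [hval] at hlim
  exact hlim.congr' heq
end

section
/- Let t_L, t_R > 0 be real and let E ∈ ℂ lie outside the real segment [−2√(t_L t_R), 2√(t_L t_R)]. Let β_2 be the root of t_L β² − E β + t_R of larger modulus. Then lim_{N→∞} (1/N) Σ_{m=1}^{N} log| 2√(t_L t_R)·cos(mπ/(N+1)) − E | = log(t_L) + log|β_2|. -/
open Real Complex Filter Finset Topology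


lemma prod_sub_pow_primroot {ζ : ℂ} {n : ℕ} (hn : 0 < n) (hζ : IsPrimitiveRoot ζ n) (x : ℂ) :
    ∏ k ∈ Finset.range n, (x - ζ ^ k) = x ^ n - 1 := by
  have himg : (Finset.range n).image (ζ ^ ·) = Polynomial.nthRootsFinset n (1 : ℂ) := by
    apply Finset.eq_of_subset_of_card_le
    · intro y hy
      simp only [Finset.mem_image] at hy
      obtain ⟨k, _, rfl⟩ := hy
      rw [Polynomial.mem_nthRootsFinset hn, ← pow_mul, mul_comm, pow_mul, hζ.pow_eq_one, one_pow]
    · rw [hζ.card_nthRootsFinset, Finset.card_image_of_injOn hζ.injOn_pow, Finset.card_range]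
  have hpoly := Polynomial.X_pow_sub_one_eq_prod (R := ℂ) hn hζ
  have := congrArg (Polynomial.eval x) hpoly
  simpa [Polynomial.eval_prod, ← himg, Finset.prod_image (fun a ha b hb h => hζ.injOn_pow ha hb h)]
    using this.symm

lemma point_id (s : ℝ) (hs : s ≠ 0) (w E : ℂ) (hw : w ≠ 0) (hE : E = s * (w + w⁻¹)) (θ : ℝ) :
    (w - Complex.exp (θ * I)) * (w - Complex.exp (-(θ * I))) =
      (w / s) * (E - ((2 * s * Real.cos θ : ℝ) : ℂ)) := by
  have hc : ((Real.cos θ : ℝ) : ℂ) = (Complex.exp (θ * I) + Complex.exp (-(θ * I))) / 2 := by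
    rw [Complex.ofReal_cos, Complex.cos]
    ring_nf
  have he : Complex.exp (θ * I) * Complex.exp (-(θ * I)) = 1 := by
    rw [← Complex.exp_add]; simp
  rw [hE, show ((2 * s * Real.cos θ : ℝ) : ℂ) = 2 * s * ((Real.cos θ : ℝ) : ℂ) by push_cast; ring,
    hc]
  have hwi : w * w⁻¹ = 1 := mul_inv_cancel₀ hw
  have hsi : (s : ℂ) * (s : ℂ)⁻¹ = 1 := mul_inv_cancel₀ (by exact_mod_cast hs)
  rw [div_eq_mul_inv]
  linear_combination he - (w * (w + w⁻¹ - Complex.exp (θ * I) - Complex.exp (-(θ * I)))) * hsi - hwi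

lemma hn_prod (s : ℝ) (hs : 0 < s) (w E : ℂ) (hw : w ≠ 0) (hE : E = s * (w + w⁻¹)) (N : ℕ) :
    w ^ (2 * (N + 1)) - 1 = (w - 1) * (w + 1) * ((w / s) ^ N *
      ∏ m ∈ Finset.Icc 1 N, (E - ((2 * s * Real.cos (m * π / (N + 1)) : ℝ) : ℂ))) := by
  set n : ℕ := N + 1 with hn
  set ζ : ℂ := Complex.exp (π * I / n) with hζdef
  have hncast : ((n : ℕ) : ℂ) ≠ 0 := Nat.cast_ne_zero.mpr (by omega)
  have hζ : IsPrimitiveRoot ζ (2 * n) := by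
    have h := Complex.isPrimitiveRoot_exp (2 * n) (by omega)
    have harg : 2 * ↑π * I / ((2 * n : ℕ) : ℂ) = ↑π * I / ↑n := by
      rw [show ((2 * n : ℕ) : ℂ) = 2 * (n : ℂ) by push_cast; ring,
        show (2 : ℂ) * ↑π * I = 2 * (↑π * I) by ring,
        mul_div_mul_left _ _ (two_ne_zero)]
    rwa [harg] at h
  have hζk : ∀ k : ℕ, ζ ^ k = Complex.exp (((k * π / n : ℝ) : ℂ) * I) := by
    intro k
    rw [hζdef, ← Complex.exp_nat_mul]
    congr 1
    push_cast
    ring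
  have hprod := prod_sub_pow_primroot (n := 2 * n) (by omega) hζ w
  have hsplit : Finset.range (2 * n) =
      insert 0 (insert n (Finset.Icc 1 N ∪ Finset.Icc (N + 2) (2 * N + 1))) := by
    ext k
    simp only [Finset.mem_range, Finset.mem_insert, Finset.mem_union, Finset.mem_Icc, hn]
    omega
  have h0 : (0 : ℕ) ∉ insert n (Finset.Icc 1 N ∪ Finset.Icc (N + 2) (2 * N + 1)) := by
    simp only [Finset.mem_insert, Finset.mem_union, Finset.mem_Icc, hn]; omega
  have h1 : n ∉ Finset.Icc 1 N ∪ Finset.Icc (N + 2) (2 * N + 1) := by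
    simp only [Finset.mem_union, Finset.mem_Icc, hn]; omega
  have h2 : Disjoint (Finset.Icc 1 N) (Finset.Icc (N + 2) (2 * N + 1)) := by
    rw [Finset.disjoint_left]
    intro a ha hb
    simp only [Finset.mem_Icc] at ha hb
    omega
  rw [hsplit, Finset.prod_insert h0, Finset.prod_insert h1, Finset.prod_union h2] at hprod
  have hrefl : ∏ k ∈ Finset.Icc (N + 2) (2 * N + 1), (w - ζ ^ k) =
      ∏ m ∈ Finset.Icc 1 N, (w - ζ ^ (2 * n - m)) := by
    apply Finset.prod_nbij' (fun k => 2 * n - k) (fun m => 2 * n - m)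
    · intro a ha; simp only [Finset.mem_Icc, hn] at *; omega
    · intro a ha; simp only [Finset.mem_Icc, hn] at *; omega
    · intro a ha; simp only [Finset.mem_Icc, hn] at *; omega
    · intro a ha; simp only [Finset.mem_Icc, hn] at *; omega
    · intro a ha
      simp only [Finset.mem_Icc, hn] at ha
      congr 2
      omega
  rw [hrefl, ← Finset.prod_mul_distrib] at hprod
  have hterm : ∀ m ∈ Finset.Icc 1 N, (w - ζ ^ m) * (w - ζ ^ (2 * n - m)) =
      (w / s) * (E - ((2 * s * Real.cos (m * π / (N + 1)) : ℝ) : ℂ)) := by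
    intro m hm
    simp only [Finset.mem_Icc] at hm
    have hminv : ζ ^ (2 * n - m) = Complex.exp (-(((m * π / n : ℝ) : ℂ) * I)) := by
      have hmul : ζ ^ (2 * n - m) * ζ ^ m = 1 := by
        rw [← pow_add]
        have : 2 * n - m + m = 2 * n := by omega
        rw [this, hζ.pow_eq_one]
      rw [hζk m] at hmul
      rw [Complex.exp_neg]
      exact eq_inv_of_mul_eq_one_left (by linear_combination hmul)
    rw [hζk m, hminv]
    have := point_id s (ne_of_gt hs) w E hw hE (m * π / n)
    rw [hn] at this ⊢
    push_cast at this ⊢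
    exact this
  have hζn : ζ ^ n = -1 := by
    rw [hζk n, show ((n : ℝ) * π / n : ℝ) = π by
      rw [mul_comm, mul_div_assoc, div_self (Nat.cast_ne_zero.mpr (by omega)), mul_one]]
    exact Complex.exp_pi_mul_I
  rw [Finset.prod_congr rfl hterm, Finset.prod_mul_distrib, Finset.prod_const,
    Nat.card_Icc] at hprod
  simp only [Nat.add_sub_cancel, pow_zero, hζn] at hprod
  rw [← hprod]
  ring

/-- Szegő-limit identity for the Hatano–Nelson model: for `E` outside the real spectral
segment `[−2√(t_L t_R), 2√(t_L t_R)]`, the Coulomb potential obtained by assigning charge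
`1/N` to each open-boundary eigenvalue `2√(t_L t_R) cos(mπ/(N+1))` converges, as `N → ∞`,
to `log t_L + log|β₂|`, where `β₂` is the root of `t_L β² − E β + t_R` of larger modulus. -/
theorem hatanoNelson_szego_limit (tL tR : ℝ) (htL : 0 < tL) (htR : 0 < tR)
    (E : ℂ) (hE : ¬ (E.im = 0 ∧ |E.re| ≤ 2 * Real.sqrt (tL * tR)))
    (β₁ β₂ : ℂ)
    (hfact : ∀ β : ℂ, (tL : ℂ) * β ^ 2 - E * β + (tR : ℂ) =
      (tL : ℂ) * (β - β₁) * (β - β₂))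
    (hord : ‖β₁‖ ≤ ‖β₂‖) :
    Tendsto (fun N : ℕ =>
        (1 / (N : ℝ)) * ∑ m ∈ Finset.Icc 1 N,
          Real.log (‖
            (((2 * Real.sqrt (tL * tR) * Real.cos (m * π / (N + 1)) : ℝ) : ℂ) - E)‖))
      atTop
      (𝓝 (Real.log tL + Real.log ‖β₂‖)) := by
  have hprod12 : (tL : ℂ) * (β₁ * β₂) = tR := by linear_combination - hfact 0
  have hsum : E = (tL : ℂ) * (β₁ + β₂) := by linear_combination (hfact 0) - (hfact 1)
  set s : ℝ := Real.sqrt (tL * tR) with hsdef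
  have hs : 0 < s := Real.sqrt_pos.mpr (by positivity)
  have hs2 : s ^ 2 = tL * tR := Real.sq_sqrt (by positivity)
  have hs2C : (s : ℂ) ^ 2 = (tL : ℂ) * tR := by exact_mod_cast congrArg (Complex.ofReal) hs2
  have hsC : (s : ℂ) ≠ 0 := by exact_mod_cast ne_of_gt hs
  have htLC : (tL : ℂ) ≠ 0 := by exact_mod_cast ne_of_gt htL
  have htRC : (tR : ℂ) ≠ 0 := by exact_mod_cast ne_of_gt htR
  have hβ₂ : β₂ ≠ 0 := by
    intro h; rw [h, mul_zero, mul_zero] at hprod12; exact htRC hprod12.symm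
  set w : ℂ := (tL : ℂ) * β₂ / s with hwdef
  have hwne : w ≠ 0 := by
    rw [hwdef]; exact div_ne_zero (mul_ne_zero htLC hβ₂) hsC
  have hwinv : w⁻¹ = (tL : ℂ) * β₁ / s := by
    apply inv_eq_of_mul_eq_one_right
    rw [hwdef]
    field_simp
    linear_combination (tL : ℂ) * hprod12 - hs2C
  have hEw : E = (s : ℂ) * (w + w⁻¹) := by
    rw [hwinv, hwdef]
    field_simp
    linear_combination hsum
  have habs1 : 1 ≤ ‖w‖ := by
    have hle : ‖w⁻¹‖ ≤ ‖w‖ := by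
      rw [hwinv, hwdef]
      simp only [norm_div, norm_mul, Complex.norm_real]
      gcongr
    rw [norm_inv] at hle
    have hwpos : 0 < ‖w‖ := norm_pos_iff.mpr hwne
    have hmi : ‖w‖ * (‖w‖)⁻¹ = 1 := mul_inv_cancel₀ (ne_of_gt hwpos)
    nlinarith [hle, hwpos, hmi]
  have habs : 1 < ‖w‖ := by
    rcases lt_or_eq_of_le habs1 with h | h
    · exact h
    · exfalso
      apply hE
      have hinv : w⁻¹ = starRingEnd ℂ w := Complex.inv_eq_conj h.symm
      have hEr : E = ((s * (2 * w.re) : ℝ) : ℂ) := by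
        rw [hEw, hinv, Complex.add_conj]
        push_cast
        ring
      constructor
      · rw [hEr]; simp
      · rw [hEr]
        simp only [Complex.ofReal_re]
        rw [abs_mul, abs_mul]
        have : |w.re| ≤ 1 := by
          have := Complex.abs_re_le_norm w
          rw [← h] at this
          linarith [this]
        have h2 : |(2:ℝ)| = 2 := by norm_num
        rw [h2, abs_of_pos hs]
        nlinarith
  have hwpos : 0 < ‖w‖ := norm_pos_iff.mpr hwne
  have hfacne : ∀ θ : ℝ, ((2 * s * Real.cos θ : ℝ) : ℂ) - E ≠ 0 := by
    intro θ h
    apply hE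
    have hEeq : E = ((2 * s * Real.cos θ : ℝ) : ℂ) := by linear_combination -h
    constructor
    · rw [hEeq]; simp
    · rw [hEeq]
      simp only [Complex.ofReal_re]
      rw [abs_mul, abs_mul, abs_of_pos hs]
      have h1 := Real.abs_cos_le_one θ
      have h2 : |(2:ℝ)| = 2 := by norm_num
      rw [h2]
      nlinarith
  have hwm1 : ‖w - 1‖ ≠ 0 := by
    intro h
    have : w - 1 = 0 := norm_eq_zero.mp (by simpa using h)
    have : w = 1 := by linear_combination this
    rw [this] at habs; simp at habs
  have hwp1 : ‖w + 1‖ ≠ 0 := by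
    intro h
    have : w + 1 = 0 := norm_eq_zero.mp (by simpa using h)
    have : w = -1 := by linear_combination this
    rw [this] at habs; simp at habs
  have hpowne : ∀ M : ℕ, 0 < M → ‖w ^ M - 1‖ ≠ 0 := by
    intro M hM h
    have h1 : w ^ M = 1 := by
      have := norm_eq_zero.mp h
      linear_combination this
    have h2 : ‖w ^ M‖ = 1 := by rw [h1]; simp
    rw [norm_pow] at h2
    have := one_lt_pow₀ habs (by omega : M ≠ 0)
    linarith
  have key : ∀ N : ℕ,
      (∑ m ∈ Finset.Icc 1 N, Real.log (‖((2 * s * Real.cos (m * π / (N + 1)) : ℝ) : ℂ) - E‖))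
      = Real.log (‖w ^ (2 * (N + 1)) - 1‖) - Real.log (‖w - 1‖)
        - Real.log (‖w + 1‖) - N * (Real.log (‖w‖) - Real.log s) := by
    intro N
    have h := hn_prod s hs w E hwne hEw N
    have habseq := congrArg norm h
    rw [norm_mul, norm_mul, norm_mul, norm_pow, norm_div, Complex.norm_of_nonneg hs.le,
      norm_prod] at habseq
    have hprodne : ∀ m ∈ Finset.Icc 1 N,
        ‖E - ((2 * s * Real.cos (m * π / (N + 1)) : ℝ) : ℂ)‖ ≠ 0 := by
      intro m _
      rw [norm_sub_rev]
      exact fun hc => hfacne _ (norm_eq_zero.mp hc)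
    have hlog := congrArg Real.log habseq
    rw [Real.log_mul (mul_ne_zero hwm1 hwp1)
        (mul_ne_zero (pow_ne_zero _ (div_ne_zero (ne_of_gt hwpos) (ne_of_gt hs)))
          (Finset.prod_ne_zero_iff.mpr hprodne)),
      Real.log_mul hwm1 hwp1,
      Real.log_mul (pow_ne_zero _ (div_ne_zero (ne_of_gt hwpos) (ne_of_gt hs)))
        (Finset.prod_ne_zero_iff.mpr hprodne),
      Real.log_pow, Real.log_div (ne_of_gt hwpos) (ne_of_gt hs),
      Real.log_prod hprodne] at hlog
    have hsum_eq : ∑ m ∈ Finset.Icc 1 N, Real.log (‖((2 * s * Real.cos (m * π / (N + 1)) : ℝ) : ℂ) - E‖)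
        = ∑ m ∈ Finset.Icc 1 N, Real.log (‖E - ((2 * s * Real.cos (m * π / (N + 1)) : ℝ) : ℂ)‖) := by
      apply Finset.sum_congr rfl
      intro m _
      rw [norm_sub_rev]
    rw [hsum_eq]
    linarith [hlog]
  set Lw : ℝ := Real.log (‖w‖) with hLw
  have hinvlt : ‖w⁻¹‖ < 1 := by
    rw [norm_inv]
    rw [inv_lt_one_iff₀]
    right
    exact habs
  have h1 : Tendsto (fun N : ℕ => (w⁻¹) ^ (2 * (N + 1))) atTop (𝓝 0) := by
    have hp := tendsto_pow_atTop_nhds_zero_of_norm_lt_one hinvlt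
    exact hp.comp (tendsto_atTop_mono (fun N => by omega : ∀ N : ℕ, N ≤ 2 * (N + 1)) tendsto_id)
  have hr : Tendsto (fun N : ℕ =>
      Real.log (‖1 - (w⁻¹) ^ (2 * (N + 1))‖)) atTop (𝓝 0) := by
    have hc : ContinuousAt (fun z : ℂ => Real.log (‖1 - z‖)) 0 := by
      have h2 : ContinuousAt (fun z : ℂ => ‖1 - z‖) 0 :=
        (continuous_norm.comp (continuous_const.sub continuous_id)).continuousAt
      exact (Real.continuousAt_log (by simp)).comp h2
    have := hc.tendsto.comp h1
    rw [sub_zero, norm_one, Real.log_one] at this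
    exact this
  have hlogpow : ∀ N : ℕ, Real.log (‖w ^ (2 * (N + 1)) - 1‖) =
      (2 * ((N : ℝ) + 1)) * Lw + Real.log (‖1 - (w⁻¹) ^ (2 * (N + 1))‖) := by
    intro N
    have hfactor : w ^ (2 * (N + 1)) - 1 = w ^ (2 * (N + 1)) * (1 - (w⁻¹) ^ (2 * (N + 1))) := by
      rw [inv_pow]
      field_simp
    have hlt : ‖(w⁻¹) ^ (2 * (N + 1))‖ < 1 := by
      rw [norm_pow, norm_inv]
      exact pow_lt_one₀ (by positivity) (inv_lt_one_of_one_lt₀ habs) (by omega)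
    have hne2 : (1 : ℂ) - (w⁻¹) ^ (2 * (N + 1)) ≠ 0 := by
      intro hc
      have : (w⁻¹) ^ (2 * (N + 1)) = 1 := by linear_combination -hc
      rw [this] at hlt
      simp at hlt
    rw [hfactor, norm_mul, norm_pow,
      Real.log_mul (pow_ne_zero _ (ne_of_gt hwpos)) (by
        intro hc
        exact hne2 (norm_eq_zero.mp (by simpa using hc))),
      Real.log_pow]
    push_cast
    ring
  have heq : (fun N : ℕ =>
      (1 / (N : ℝ)) * ∑ m ∈ Finset.Icc 1 N,
          Real.log (‖((2 * s * Real.cos (m * π / (N + 1)) : ℝ) : ℂ) - E‖))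
      =ᶠ[atTop] (fun N : ℕ => (2 * ((N : ℝ) + 1) / N) * Lw
        + (1 / N) * Real.log (‖1 - (w⁻¹) ^ (2 * (N + 1))‖)
        - (1 / N) * (Real.log (‖w - 1‖) + Real.log (‖w + 1‖))
        - (Lw - Real.log s)) := by
    filter_upwards [eventually_ge_atTop 1] with N hN
    have hNne : (N : ℝ) ≠ 0 := Nat.cast_ne_zero.mpr (by omega)
    rw [key N, hlogpow N]
    field_simp
    ring
  have hlim : Tendsto (fun N : ℕ =>
      (2 * ((N : ℝ) + 1) / N) * Lw
        + (1 / N) * Real.log (‖1 - (w⁻¹) ^ (2 * (N + 1))‖)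
        - (1 / N) * (Real.log (‖w - 1‖) + Real.log (‖w + 1‖))
        - (Lw - Real.log s)) atTop
      (𝓝 (2 * Lw + 0 * 0 - 0 * (Real.log (‖w - 1‖) + Real.log (‖w + 1‖)) - (Lw - Real.log s))) := by
    apply Tendsto.sub _ tendsto_const_nhds
    apply Tendsto.sub
    · apply Tendsto.add
      · apply Tendsto.mul_const
        have hratio : (fun N : ℕ => 2 * ((N : ℝ) + 1) / N) =ᶠ[atTop]
            (fun N : ℕ => 2 + 2 * (1 / N)) := by
          filter_upwards [eventually_ge_atTop 1] with N hN
          have hNne : (N : ℝ) ≠ 0 := Nat.cast_ne_zero.mpr (by omega)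
          field_simp
        refine Tendsto.congr' hratio.symm ?_
        have hbase := (tendsto_const_nhds :
            Tendsto (fun _ : ℕ => (2:ℝ)) atTop (𝓝 2)).add
          ((tendsto_one_div_atTop_nhds_zero_nat).const_mul (2:ℝ))
        simpa using hbase
      · exact (tendsto_one_div_atTop_nhds_zero_nat).mul hr
    · exact (tendsto_one_div_atTop_nhds_zero_nat).mul_const _
  have hvalue : 2 * Lw + 0 * 0 - 0 * (Real.log (‖w - 1‖) + Real.log (‖w + 1‖)) - (Lw - Real.log s)
      = Real.log tL + Real.log (‖β₂‖) := by
    have habsw : ‖w‖ = tL * ‖β₂‖ / s := by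
      rw [hwdef, norm_div, norm_mul, Complex.norm_of_nonneg htL.le,
        Complex.norm_of_nonneg hs.le]
    have hβ₂abs : 0 < ‖β₂‖ := norm_pos_iff.mpr hβ₂
    rw [hLw, habsw, Real.log_div (by positivity) (ne_of_gt hs),
      Real.log_mul (ne_of_gt htL) (ne_of_gt hβ₂abs)]
    ring
  exact Tendsto.congr' heq.symm (hvalue ▸ hlim)
end

section
/- For E ∈ ℂ, let β_1, β_2, β_3 be the three roots (with multiplicity) of β³ − E β + 1, ordered so that |β_1| ≤ |β_2| ≤ |β_3|. Then |β_1| = |β_2| if and only if E = ξ e^{2πim/3} for some m ∈ {0, 1, 2} and some real ξ ∈ [0, 3·4^{−1/3}]. That is, the set of E satisfying the GBZ condition for H(β) = β² + β^{−1} is the union of the three segments e^{2πim/3}·[0, 3/∛4], forming a three-fold symmetric fan joined at E = 0. -/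
open Real Complex

/-- Two complex numbers have equal modulus iff the ratio `(v+w)²/(vw)` lies in `[0,4]`. -/
lemma equal_abs_iff (v w : ℂ) (hw : w ≠ 0) :
    ‖v‖ = ‖w‖ ↔
      ∃ t : ℝ, 0 ≤ t ∧ t ≤ 4 ∧ (v + w) ^ 2 = (t : ℂ) * (v * w) := by
  have hv : v = (v / w) * w := by field_simp
  set z := v / w with hzdef
  constructor
  · intro h
    have habs : ‖z‖ = 1 := by
      rw [hzdef, norm_div, h, div_self (norm_ne_zero_iff.mpr hw)]
    have hre := Complex.abs_re_le_norm z
    rw [habs] at hre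
    obtain ⟨hre1, hre2⟩ := abs_le.mp hre
    have hmc : z * (starRingEnd ℂ) z = 1 := by
      rw [Complex.mul_conj, Complex.normSq_eq_norm_sq, habs]
      norm_num
    have hadd : z + (starRingEnd ℂ) z = 2 * (z.re : ℂ) := by
      rw [Complex.add_conj]; push_cast; ring
    refine ⟨2 * z.re + 2, by linarith, by linarith, ?_⟩
    rw [hv]
    push_cast
    linear_combination (z * w ^ 2) * hadd - w ^ 2 * hmc
  · rintro ⟨t, ht0, ht4, heq⟩
    rw [hv] at heq ⊢
    have hz2 : z ^ 2 - ((t : ℂ) - 2) * z + 1 = 0 := by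
      have hw2 : (w : ℂ) ^ 2 ≠ 0 := pow_ne_zero 2 hw
      have h0 : (z ^ 2 - ((t : ℂ) - 2) * z + 1) * w ^ 2 = 0 * w ^ 2 := by
        linear_combination heq
      exact mul_right_cancel₀ hw2 h0
    have hre : z.re ^ 2 - z.im ^ 2 - (t - 2) * z.re + 1 = 0 := by
      have := congrArg Complex.re hz2
      simp [pow_two, Complex.mul_re, Complex.mul_im] at this
      linarith [this]
    have him : z.im * (2 * z.re - (t - 2)) = 0 := by
      have := congrArg Complex.im hz2
      simp [pow_two, Complex.mul_re, Complex.mul_im] at this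
      linear_combination this
    have hsq : z.re ^ 2 + z.im ^ 2 = 1 := by
      rcases mul_eq_zero.mp him with hy | hx
      · rw [hy] at hre
        have e1 : z.re ^ 2 + 1 = (t - 2) * z.re := by nlinarith [hre]
        have e2 : (z.re ^ 2 - 1) ^ 2 = ((t - 2) ^ 2 - 4) * z.re ^ 2 := by
          linear_combination (z.re ^ 2 + 1 + (t - 2) * z.re) * e1
        have h3 : (0 : ℝ) ≤ 4 - (t - 2) ^ 2 := by nlinarith
        have h1 : (z.re ^ 2 - 1) ^ 2 ≤ 0 := by
          nlinarith [mul_nonneg h3 (sq_nonneg z.re), e2]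
        have h2 : (z.re ^ 2 - 1) ^ 2 = 0 := le_antisymm h1 (sq_nonneg _)
        have h4 : z.re ^ 2 - 1 = 0 := by
          exact pow_eq_zero_iff (n := 2) (by norm_num) |>.mp h2
        rw [hy]
        linear_combination h4
      · linear_combination (-1 : ℝ) * hre + z.re * hx
    have habs : ‖z‖ = 1 := by
      have hsq' : ‖z‖ ^ 2 = 1 := by
        rw [Complex.sq_norm, Complex.normSq_apply]
        linear_combination hsq
      have h1 : (‖z‖ - 1) * (‖z‖ + 1) = 0 := by
        linear_combination hsq'
      rcases mul_eq_zero.mp h1 with h | h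
      · linarith
      · linarith [norm_nonneg z]
    rw [norm_mul, habs, one_mul]

lemma cube_bound : (3 * (4 : ℝ) ^ (-(1 : ℝ) / 3)) ^ 3 = 27 / 4 := by
  rw [mul_pow, ← Real.rpow_natCast ((4:ℝ) ^ (-(1:ℝ)/3)) 3,
    ← Real.rpow_mul (by norm_num : (0:ℝ) ≤ 4)]
  norm_num

lemma rt_cube {t : ℝ} (ht : 0 < t) : (t ^ ((1:ℝ)/3)) ^ 3 = t := by
  rw [← Real.rpow_natCast (t ^ ((1:ℝ)/3)) 3, ← Real.rpow_mul ht.le]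
  norm_num

set_option maxHeartbeats 1000000 in
/-- GBZ condition for the fan model `H(β) = β² + β⁻¹`: with the roots `β₁, β₂, β₃` of
`β³ − E β + 1` ordered by increasing modulus, `|β₁| = |β₂|` holds if and only if
`E = ξ e^{2πim/3}` for some `m ∈ {0,1,2}` and some real `ξ ∈ [0, 3·4^{−1/3}]`;
i.e. the spectral graph is a three-fold symmetric fan joined at `E = 0`. -/
theorem fan_model_gbz_condition (E : ℂ) (β₁ β₂ β₃ : ℂ)
    (hfact : ∀ β : ℂ, β ^ 3 - E * β + 1 = (β - β₁) * (β - β₂) * (β - β₃))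
    (hord₁ : ‖β₁‖ ≤ ‖β₂‖)
    (hord₂ : ‖β₂‖ ≤ ‖β₃‖) :
    ‖β₁‖ = ‖β₂‖ ↔
      ∃ m : Fin 3, ∃ ξ : ℝ, 0 ≤ ξ ∧ ξ ≤ 3 * (4 : ℝ) ^ (-(1 : ℝ) / 3) ∧
        E = (ξ : ℂ) * Complex.exp (2 * π * Complex.I * (m : ℕ) / 3) := by
  have h0 := hfact 0
  have h1f := hfact 1
  have hm1 := hfact (-1)
  have hP : β₁ * β₂ * β₃ = -1 := by linear_combination h0
  have hS : β₁ + β₂ + β₃ = 0 := by linear_combination (h1f + hm1) / 2 - h0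
  have hQ : β₁ * β₂ + β₁ * β₃ + β₂ * β₃ = -E := by
    linear_combination (-1 : ℂ) * h1f + hS + h0
  have hb1 : β₁ ≠ 0 := by rintro rfl; simp at hP
  have hb2 : β₂ ≠ 0 := by rintro rfl; simp at hP
  have hb3 : β₃ ≠ 0 := by rintro rfl; simp at hP
  constructor
  · -- forward direction
    intro hab
    have hprod : ‖β₁‖ * ‖β₂‖ * ‖β₃‖ = 1 := by
      have := congrArg (norm : ℂ → ℝ) hP
      simpa [map_mul] using this
    have h5 : ‖β₁‖ * ‖β₂‖ ≤ ‖β₃‖ * ‖β₃‖ :=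
      mul_le_mul (hord₁.trans hord₂) hord₂ (norm_nonneg _) (norm_nonneg _)
    have h6 : 1 ≤ ‖β₃‖ ^ 3 := by
      nlinarith [norm_nonneg β₃, hprod, h5]
    have habs3 : 1 ≤ ‖β₃‖ := by
      nlinarith [h6, norm_nonneg β₃, sq_nonneg (‖β₃‖),
        sq_nonneg (‖β₃‖ - 1)]
    obtain ⟨t, ht0, ht4, heq⟩ := (equal_abs_iff β₁ β₂ hb2).mp hab
    have hu3 : (β₁ + β₂) ^ 3 = (t : ℂ) := by
      linear_combination (β₁ + β₂) * heq + (t : ℂ) * β₁ * β₂ * hS - (t : ℂ) * hP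
    have habsu : ‖β₁ + β₂‖ = ‖β₃‖ := by
      have h7 : β₁ + β₂ = -β₃ := by linear_combination hS
      simp [h7]
    have ht1 : 1 ≤ t := by
      have h8 := congrArg (norm : ℂ → ℝ) hu3
      rw [norm_pow, habsu, Complex.norm_of_nonneg ht0] at h8
      nlinarith [habs3]
    set ρ := t ^ ((1:ℝ)/3) with hρdef
    have hρpos : 0 < ρ := Real.rpow_pos_of_pos (by linarith) _
    have hρ3 : ρ ^ 3 = t := rt_cube (by linarith)
    have hρC : ((ρ : ℝ) : ℂ) ^ 3 = (t : ℂ) := by exact_mod_cast congrArg (Complex.ofReal) hρ3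
    have hρne : ((ρ : ℝ) : ℂ) ≠ 0 := by exact_mod_cast hρpos.ne'
    have htne : ((t : ℝ) : ℂ) ≠ 0 := by
      exact_mod_cast (show (0:ℝ) < t by linarith).ne'
    have hζ3 : ((β₁ + β₂) / (ρ:ℂ)) ^ 3 = 1 := by
      rw [div_pow, hu3, hρC, div_self htne]
    obtain ⟨k, hk3, hkz⟩ :=
      (Complex.isPrimitiveRoot_exp 3 (by norm_num)).eq_pow_of_pow_eq_one hζ3
    have hkexp : (β₁ + β₂) = (ρ : ℂ) * Complex.exp (2 * π * I * (k:ℕ) / 3) := by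
      push_cast at hkz
      have h9 : Complex.exp (2*π*I/3) ^ k = Complex.exp (2*π*I*(k:ℕ)/3) := by
        rw [← Complex.exp_nat_mul]; ring_nf
      rw [← h9, hkz]
      field_simp
    have hEu : E * (β₁ + β₂) = (t : ℂ) - 1 := by
      linear_combination (β₁+β₂)*hQ + (-(β₁+β₂)^2 - β₁*β₂)*hS + hu3 + hP
    have hξ0 : 0 ≤ (t - 1)/ρ := div_nonneg (by linarith) hρpos.le
    have hξle : (t - 1)/ρ ≤ 3 * (4:ℝ) ^ (-(1:ℝ)/3) := by
      have hcube : ((t-1)/ρ)^3 ≤ 27/4 := by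
        rw [div_pow, hρ3, div_le_div_iff₀ (by linarith) (by norm_num)]
        nlinarith [mul_nonneg (by linarith : (0:ℝ) ≤ 4 - t) (sq_nonneg (2*t+1))]
      have h30 : 0 ≤ 3 * (4:ℝ) ^ (-(1:ℝ)/3) := by positivity
      apply le_of_pow_le_pow_left₀ (n := 3) (by norm_num) h30
      rw [cube_bound]; exact hcube
    have hEρ : E * (ρ:ℂ) * Complex.exp (2*π*I*(k:ℕ)/3) = (t:ℂ) - 1 := by
      rw [mul_assoc, ← hkexp]; exact hEu
    have key : ∀ m : Fin 3,
        Complex.exp (2*π*I*((m:ℕ):ℂ)/3) * Complex.exp (2*π*I*((k:ℕ):ℂ)/3) = 1 →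
        ∃ m : Fin 3, ∃ ξ : ℝ, 0 ≤ ξ ∧ ξ ≤ 3 * (4 : ℝ) ^ (-(1 : ℝ) / 3) ∧
          E = (ξ : ℂ) * Complex.exp (2 * π * Complex.I * (m : ℕ) / 3) := by
      intro m hmk
      refine ⟨m, (t-1)/ρ, hξ0, hξle, ?_⟩
      have hcast : ((((t-1)/ρ) : ℝ) : ℂ) = ((t:ℂ) - 1) / (ρ:ℂ) := by push_cast; ring
      rw [hcast, div_mul_eq_mul_div, eq_div_iff hρne]
      linear_combination Complex.exp (2*π*I*((m:ℕ):ℂ)/3) * hEρ - E * (ρ:ℂ) * hmk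
    interval_cases k
    · refine key ⟨0, by norm_num⟩ ?_
      rw [← Complex.exp_add]
      norm_num
    · refine key ⟨2, by norm_num⟩ ?_
      rw [← Complex.exp_add]
      rw [show (2*π*I*((2:ℕ):ℂ)/3 + 2*π*I*((1:ℕ):ℂ)/3 : ℂ) = 2*π*I by push_cast; ring]
      exact Complex.exp_two_pi_mul_I
    · refine key ⟨1, by norm_num⟩ ?_
      rw [← Complex.exp_add]
      rw [show (2*π*I*((1:ℕ):ℂ)/3 + 2*π*I*((2:ℕ):ℂ)/3 : ℂ) = 2*π*I by push_cast; ring]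
      exact Complex.exp_two_pi_mul_I
  · -- backward direction
    rintro ⟨m, ξ, hξ0, hξle, hE⟩
    have hξ3 : ξ ^ 3 ≤ 27 / 4 := by
      calc ξ ^ 3 ≤ (3 * (4:ℝ) ^ (-(1:ℝ)/3)) ^ 3 := pow_le_pow_left₀ hξ0 hξle 3
      _ = 27 / 4 := cube_bound
    have hIVT := intermediate_value_Icc (by norm_num : (1:ℝ) ≤ 4)
      (Continuous.continuousOn (by continuity : Continuous (fun c : ℝ => (c-1)^3 - ξ^3 * c)))
    have h0mem : (0:ℝ) ∈ Set.Icc ((1-1:ℝ)^3 - ξ^3 * 1) ((4-1:ℝ)^3 - ξ^3 * 4) := by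
      constructor
      · simp
        nlinarith [pow_nonneg hξ0 3]
      · nlinarith
    obtain ⟨c, hcmem, hc⟩ := hIVT h0mem
    obtain ⟨hc1, hc4⟩ := hcmem
    simp only at hc
    set ρ := c ^ ((1:ℝ)/3) with hρdef
    have hρpos : 0 < ρ := Real.rpow_pos_of_pos (by linarith) _
    have hρ3 : ρ ^ 3 = c := rt_cube (by linarith)
    have hξρ : ξ * ρ = c - 1 := by
      have h3 : (ξ * ρ) ^ 3 = (c - 1) ^ 3 := by rw [mul_pow, hρ3]; linarith [hc]
      exact le_antisymm
        (le_of_pow_le_pow_left₀ (by norm_num) (by linarith) h3.le)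
        (le_of_pow_le_pow_left₀ (by norm_num) (mul_nonneg hξ0 hρpos.le) h3.ge)
    set θ : ℂ := 2 * π * I * ((m:ℕ):ℂ) / 3 with hθdef
    set u₀ : ℂ := (ρ:ℂ) * Complex.exp (-θ) with hu₀def
    have hexp_unit : Complex.exp θ * Complex.exp (-θ) = 1 := by
      rw [← Complex.exp_add]; simp
    have hEu₀ : E * u₀ = ((c:ℝ):ℂ) - 1 := by
      have e1 : E * u₀ = (ξ:ℂ) * (ρ:ℂ) * (Complex.exp θ * Complex.exp (-θ)) := by
        rw [hE, hu₀def]; ring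
      rw [e1, hexp_unit, mul_one, ← Complex.ofReal_mul, hξρ]
      push_cast
      ring
    have hexp3 : Complex.exp (-θ) ^ 3 = 1 := by
      rw [← Complex.exp_nat_mul]
      rw [show ((3:ℕ):ℂ) * (-θ) = (-(m:ℕ) : ℤ) * (2 * π * I) by rw [hθdef]; push_cast; ring]
      exact Complex.exp_int_mul_two_pi_mul_I _
    have hu₀3 : u₀ ^ 3 = ((c:ℝ):ℂ) := by
      rw [hu₀def, mul_pow, hexp3, mul_one]
      exact_mod_cast congrArg Complex.ofReal hρ3
    have hu₀ne : u₀ ≠ 0 := by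
      rw [hu₀def]
      exact mul_ne_zero (by exact_mod_cast hρpos.ne') (Complex.exp_ne_zero _)
    have habs_u₀ : ‖u₀‖ = ρ := by
      rw [hu₀def, norm_mul, Complex.norm_exp]
      rw [show (-θ).re = 0 by rw [hθdef]; simp]
      simp [Real.exp_zero, _root_.abs_of_nonneg hρpos.le]
    have hroot : ((-u₀) - β₁) * ((-u₀) - β₂) * ((-u₀) - β₃) = 0 := by
      rw [← hfact (-u₀)]
      linear_combination hEu₀ - hu₀3
    rcases mul_eq_zero.mp hroot with h12 | h3
    · rcases mul_eq_zero.mp h12 with h1 | h2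
      · -- β₁ = -u₀
        have hsum : β₂ + β₃ = u₀ := by linear_combination hS + h1
        have hprod : β₂ * β₃ * u₀ = 1 := by linear_combination -hP - β₂ * β₃ * h1
        have h23 : ‖β₂‖ = ‖β₃‖ :=
          (equal_abs_iff β₂ β₃ hb3).mpr ⟨c, by linarith, by linarith, by
            linear_combination (β₂ + β₃ + u₀) * hsum + β₂ * β₃ * hu₀3 - u₀^2 * hprod⟩
        have habs1 : ‖β₁‖ = ρ := by
          rw [show β₁ = -u₀ by linear_combination -h1, norm_neg, habs_u₀]
        have hs : ‖β₂‖ * ‖β₂‖ * ρ = 1 := by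
          have := congrArg (norm : ℂ → ℝ) hprod
          rw [norm_mul, norm_mul, habs_u₀, norm_one, ← h23] at this
          exact this
        have hρs : ρ ≤ ‖β₂‖ := habs1 ▸ hord₁
        have hsnn := norm_nonneg β₂
        have hcle : c ≤ 1 := by
          nlinarith [mul_le_mul_of_nonneg_right (mul_le_mul hρs hρs hρpos.le hsnn) hρpos.le, hs, hρ3]
        have hρ1 : ρ = 1 := by nlinarith [hρ3, hρpos, mul_pos hρpos hρpos]
        rw [hρ1] at hs
        have hsq : (‖β₂‖ - 1) * (‖β₂‖ + 1) = 0 := by linear_combination hs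
        rcases mul_eq_zero.mp hsq with h | h
        · rw [habs1, hρ1]; linarith
        · linarith
      · -- β₂ = -u₀
        have hsum : β₁ + β₃ = u₀ := by linear_combination hS + h2
        have hprod : β₁ * β₃ * u₀ = 1 := by linear_combination -hP - β₁ * β₃ * h2
        have h13 : ‖β₁‖ = ‖β₃‖ :=
          (equal_abs_iff β₁ β₃ hb3).mpr ⟨c, by linarith, by linarith, by
            linear_combination (β₁ + β₃ + u₀) * hsum + β₁ * β₃ * hu₀3 - u₀^2 * hprod⟩
        have habs2 : ‖β₂‖ = ρ := by
          rw [show β₂ = -u₀ by linear_combination -h2, norm_neg, habs_u₀]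
        have hs : ‖β₁‖ * ‖β₁‖ * ρ = 1 := by
          have := congrArg (norm : ℂ → ℝ) hprod
          rw [norm_mul, norm_mul, habs_u₀, norm_one, ← h13] at this
          exact this
        have hρs : ρ ≤ ‖β₃‖ := habs2 ▸ hord₂
        rw [← h13] at hρs
        have hsnn := norm_nonneg β₁
        have hcle : c ≤ 1 := by
          nlinarith [mul_le_mul_of_nonneg_right (mul_le_mul hρs hρs hρpos.le hsnn) hρpos.le, hs, hρ3]
        have hρ1 : ρ = 1 := by nlinarith [hρ3, hρpos, mul_pos hρpos hρpos]
        rw [hρ1] at hs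
        have hsq : (‖β₁‖ - 1) * (‖β₁‖ + 1) = 0 := by linear_combination hs
        rcases mul_eq_zero.mp hsq with h | h
        · rw [habs2, hρ1]; linarith
        · linarith
    · -- β₃ = -u₀
      have hsum : β₁ + β₂ = u₀ := by linear_combination hS + h3
      have hprod : β₁ * β₂ * u₀ = 1 := by linear_combination -hP - β₁ * β₂ * h3
      exact (equal_abs_iff β₁ β₂ hb2).mpr ⟨c, by linarith, by linarith, by
        linear_combination (β₁ + β₂ + u₀) * hsum + β₁ * β₂ * hu₀3 - u₀^2 * hprod⟩
end

section
/- Let t_1, t_2, g, u, v be real with u ≠ 0, v ≠ 0 and |u| ≠ |v|, and let H(β) = [[t_1 + i(g + t_2), u + v β^{−1}], [u + v β, t_1 − i(g + t_2)]] for β ∈ ℂ∖{0}. Set E = t_1 + i(g + t_2). Let r be real with min(|v/u|, |u/v|) < r < max(|v/u|, |u/v|), and define the 2×2 complex matrix M by M_{ab} = (1/(2πi)) ∮_{|β|=r} [ (H(β) − E·I_2)^{−1} ]_{ab} · dβ/β, the contour being the counterclockwise circle of radius r centered at the origin. Then det M = 0 if and only if |u| < |v|. Hence E = t_1 ± i(g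 + t_2) are isolated edge modes exactly when |u| < |v|. -/
open Real Complex Matrix

lemma circleInt_inv_of_lt {w : ℂ} {r : ℝ} (h : ‖w‖ < r) :
    (∮ z in C(0, r), (z - w)⁻¹) = 2 * π * Complex.I :=
  circleIntegral.integral_sub_inv_of_mem_ball
    (by simpa [Metric.mem_ball, Complex.dist_eq] using h)

lemma circleInt_inv_of_gt {w : ℂ} {r : ℝ} (hr : 0 ≤ r) (h : r < ‖w‖) :
    (∮ z in C(0, r), (z - w)⁻¹) = 0 := by
  apply Complex.circleIntegral_eq_zero_of_differentiable_on_off_countable hr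
    Set.countable_empty (s := ∅)
  · apply ContinuousOn.inv₀ (by fun_prop)
    intro z hz
    have hz' : ‖z‖ ≤ r := by simpa [Complex.dist_eq] using hz
    exact sub_ne_zero.2 (fun h' => absurd (h' ▸ hz') (not_le.2 h))
  · intro z hz
    have hz' : ‖z‖ ≤ r := by
      have := hz.1
      simp [Metric.mem_ball, Complex.dist_eq] at this
      exact this.le
    have hzw : z - w ≠ 0 := sub_ne_zero.2 (fun h' => absurd (h' ▸ hz') (not_le.2 h))
    exact ((differentiableAt_id (𝕜:=ℂ) (x:=z)).sub_const w).inv hzw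

lemma circleInt_integrable {w : ℂ} {r : ℝ} (hr : 0 < r) (h : ‖w‖ ≠ r) :
    CircleIntegrable (fun z => (z - w)⁻¹) 0 r := by
  rw [circleIntegrable_sub_inv_iff]
  right
  simp [Metric.mem_sphere, Complex.dist_eq, abs_of_pos hr, h]

lemma circleInt_zero {r : ℝ} : (∮ _z in C(0, r), (0:ℂ)) = 0 := by
  simp [circleIntegral]


/-- The Bloch matrix of the chiral-symmetry-broken two-band model:
`H(β) = [[t₁ + i(g + t₂), u + v β⁻¹], [u + v β, t₁ − i(g + t₂)]]`. -/
noncomputable def twoBandModel (t₁ t₂ g u v : ℝ) (β : ℂ) : Matrix (Fin 2) (Fin 2) ℂ :=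
  !![(t₁ : ℂ) + Complex.I * ((g : ℂ) + (t₂ : ℂ)), (u : ℂ) + (v : ℂ) * β⁻¹;
     (u : ℂ) + (v : ℂ) * β, (t₁ : ℂ) - Complex.I * ((g : ℂ) + (t₂ : ℂ))]

/-- At the candidate edge-mode energy `E = t₁ + i(g + t₂)`, with
`min(|v/u|, |u/v|) < r < max(|v/u|, |u/v|)`, the edge matrix
`M_{ab} = (1/(2πi)) ∮_{|β|=r} [(H(β) − E)⁻¹]_{ab} dβ/β` satisfies `det M = 0` if and
only if `|u| < |v|`; hence `E = t₁ ± i(g + t₂)` are isolated edge modes exactly when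
`|u| < |v|`. -/
theorem twoBandModel_edge_mode (t₁ t₂ g u v : ℝ) (hu : u ≠ 0) (hv : v ≠ 0)
    (huv : |u| ≠ |v|)
    (E : ℂ) (hE : E = (t₁ : ℂ) + Complex.I * ((g : ℂ) + (t₂ : ℂ)))
    (r : ℝ) (hr₁ : min |v / u| |u / v| < r) (hr₂ : r < max |v / u| |u / v|) :
    (Matrix.of fun a b : Fin 2 =>
        (2 * (π : ℂ) * Complex.I)⁻¹ *
          ∮ β in C(0, r),
            ((twoBandModel t₁ t₂ g u v β - E • (1 : Matrix (Fin 2) (Fin 2) ℂ))⁻¹ a b) *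
              β⁻¹).det = 0 ↔
      |u| < |v| := by
  have hu' : (u : ℂ) ≠ 0 := Complex.ofReal_ne_zero.2 hu
  have hv' : (v : ℂ) ≠ 0 := Complex.ofReal_ne_zero.2 hv
  have hau : (0:ℝ) < |u| := abs_pos.2 hu
  have hav : (0:ℝ) < |v| := abs_pos.2 hv
  have hr0 : 0 < r :=
    lt_trans (lt_min (by positivity) (by positivity)) hr₁
  have hra : r ≠ |v / u| := by
    intro h
    rcases le_total |v / u| |u / v| with h' | h'
    · rw [min_eq_left h'] at hr₁; exact hr₁.ne' h
    · rw [max_eq_left h'] at hr₂; exact hr₂.ne h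
  have hrb : r ≠ |u / v| := by
    intro h
    rcases le_total |u / v| |v / u| with h' | h'
    · rw [min_eq_right h'] at hr₁; exact hr₁.ne' h
    · rw [max_eq_right h'] at hr₂; exact hr₂.ne h
  set A : ℂ → Matrix (Fin 2) (Fin 2) ℂ :=
    fun β => twoBandModel t₁ t₂ g u v β - E • (1 : Matrix (Fin 2) (Fin 2) ℂ) with hA
  set c : ℂ := Complex.I * ((g : ℂ) + (t₂ : ℂ)) with hc
  have hAeq : ∀ β : ℂ, A β = !![(0:ℂ), (u:ℂ) + v * β⁻¹; (u:ℂ) + v * β, -(2*c)] := by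
    intro β
    ext i j
    fin_cases i <;> fin_cases j <;>
      simp [hA, twoBandModel, hE, hc, Matrix.sub_apply, Matrix.smul_apply, Matrix.one_apply] <;>
      ring
  set w₁ : ℂ := -((u:ℂ) / v) with hw₁
  set w₂ : ℂ := -((v:ℂ) / u) with hw₂
  have habs1 : ‖w₁‖ = |u / v| := by
    simp [hw₁, map_div₀, Complex.norm_real, abs_div]
  have habs2 : ‖w₂‖ = |v / u| := by
    simp [hw₂, map_div₀, Complex.norm_real, abs_div]
  -- the (1,1) entry of the inverse vanishes identically
  have h11 : ∀ β : ℂ, (A β)⁻¹ 1 1 = 0 := by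
    intro β
    rw [hAeq β, Matrix.inv_def, Matrix.adjugate_fin_two_of]
    simp
  -- pointwise identities on the circle
  have key : ∀ β ∈ Metric.sphere (0:ℂ) r,
      β ≠ 0 ∧ ((u:ℂ) + v * β ≠ 0) ∧ ((u:ℂ) * β + v ≠ 0) := by
    intro β hβmem
    have hβ : ‖β‖ = r := by simpa [Complex.dist_eq] using hβmem
    have hβ0 : β ≠ 0 := by
      intro h; rw [h] at hβ; simp at hβ; exact hr0.ne' hβ.symm
    refine ⟨hβ0, ?_, ?_⟩
    · intro h
      have h' : (v:ℂ) * β = -(u:ℂ) := by linear_combination h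
      have := congrArg (‖·‖) h'
      simp [_root_.map_mul, Complex.norm_real, hβ] at this
      apply hrb
      rw [abs_div]
      field_simp
      linear_combination this
    · intro h
      have h' : (v:ℂ) = -(u:ℂ) * β := by linear_combination h
      have := congrArg (‖·‖) h'
      simp [_root_.map_mul, Complex.norm_real, hβ] at this
      apply hra
      rw [abs_div]
      field_simp
      linear_combination -this
  have hBinv : ∀ β ∈ Metric.sphere (0:ℂ) r, (A β)⁻¹ =
      !![2*c*β*(((u:ℂ) * β + v) * ((u:ℂ) + v * β))⁻¹, ((u:ℂ) + v * β)⁻¹;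
         β * ((u:ℂ) * β + v)⁻¹, 0] := by
    intro β hβmem
    obtain ⟨hβ0, h1, h3⟩ := key β hβmem
    apply Matrix.inv_eq_right_inv
    rw [hAeq β]
    ext i j
    fin_cases i <;> fin_cases j <;>
      simp [Matrix.mul_apply, Fin.sum_univ_two, Matrix.one_apply] <;>
      field_simp [h1, h3] <;>
      first
        | ring
        | linear_combination (v:ℂ) * β^2 * mul_inv_cancel₀ h1
        | linear_combination (β:ℂ) * mul_inv_cancel₀ h3
        | linear_combination 2*c*β * mul_inv_cancel₀ (mul_ne_zero h3 h1)
  have hEq01 : Set.EqOn (fun β => (A β)⁻¹ 0 1 * β⁻¹)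
      (fun β => (u:ℂ)⁻¹ * ((β - 0)⁻¹ - (β - w₁)⁻¹)) (Metric.sphere (0:ℂ) r) := by
    intro β hβmem
    obtain ⟨hβ0, h1, h3⟩ := key β hβmem
    have hβw₁ : β - w₁ ≠ 0 := by
      intro h
      apply h1
      have hb : β = w₁ := sub_eq_zero.mp h
      rw [hb, hw₁]
      field_simp
      ring
    show (A β)⁻¹ 0 1 * β⁻¹ = (u:ℂ)⁻¹ * ((β - 0)⁻¹ - (β - w₁)⁻¹)
    rw [hBinv β hβmem]
    simp only [Matrix.cons_val', Matrix.cons_val_zero, Matrix.cons_val_one, Matrix.head_cons,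
      Matrix.empty_val', Matrix.of_apply, Matrix.cons_val_fin_one, sub_zero, hw₁]
    field_simp [h1, hβw₁]
    linear_combination (v:ℂ) * β * mul_inv_cancel₀ h1
  have hEq10 : Set.EqOn (fun β => (A β)⁻¹ 1 0 * β⁻¹)
      (fun β => (u:ℂ)⁻¹ * (β - w₂)⁻¹) (Metric.sphere (0:ℂ) r) := by
    intro β hβmem
    obtain ⟨hβ0, h1, h3⟩ := key β hβmem
    have hβw₂ : β - w₂ ≠ 0 := by
      intro h
      apply h3
      have hb : β = w₂ := sub_eq_zero.mp h
      rw [hb, hw₂]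
      field_simp
      ring
    show (A β)⁻¹ 1 0 * β⁻¹ = (u:ℂ)⁻¹ * (β - w₂)⁻¹
    rw [hBinv β hβmem]
    simp only [Matrix.cons_val', Matrix.cons_val_zero, Matrix.cons_val_one, Matrix.head_cons,
      Matrix.empty_val', Matrix.of_apply, Matrix.cons_val_fin_one, hw₂]
    field_simp [h3, hβw₂]
    linear_combination (0 : ℂ) * mul_inv_cancel₀ h3
  -- integrals
  have hI01 : (∮ β in C(0, r), (A β)⁻¹ 0 1 * β⁻¹) =
      (u:ℂ)⁻¹ * ((∮ β in C(0, r), (β - 0)⁻¹) - ∮ β in C(0, r), (β - w₁)⁻¹) := by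
    rw [circleIntegral.integral_congr hr0.le hEq01, circleIntegral.integral_const_mul,
      circleIntegral.integral_sub (circleInt_integrable hr0 (by simp [hr0.ne]))
        (circleInt_integrable hr0 (by rw [habs1]; exact hrb.symm))]
  have hI10 : (∮ β in C(0, r), (A β)⁻¹ 1 0 * β⁻¹) =
      (u:ℂ)⁻¹ * (∮ β in C(0, r), (β - w₂)⁻¹) := by
    rw [circleIntegral.integral_congr hr0.le hEq10, circleIntegral.integral_const_mul]
  have hI11 : (∮ β in C(0, r), (A β)⁻¹ 1 1 * β⁻¹) = 0 := by
    have : (fun β : ℂ => (A β)⁻¹ 1 1 * β⁻¹) = fun _ => (0:ℂ) := by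
      funext β; rw [h11 β, zero_mul]
    rw [this, circleInt_zero]
  have h2pi : (2 * (π:ℂ) * Complex.I) ≠ 0 := by
    simp [Real.pi_ne_zero, Complex.I_ne_zero, Complex.ofReal_ne_zero]
  rw [Matrix.det_fin_two]
  simp only [Matrix.of_apply]
  rw [hI11, hI01, hI10, mul_zero, mul_zero, zero_sub]
  rcases huv.lt_or_gt with hlt | hlt
  · -- |u| < |v| : min = |u/v|, max = |v/u|
    have hmm : |u / v| < |v / u| := by
      rw [abs_div, abs_div]
      exact div_lt_div₀ hlt (le_of_lt (by exact hlt)) (by positivity) hau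
    have hr1' : |u / v| < r := by
      rw [min_eq_right hmm.le] at hr₁; exact hr₁
    have hr2' : r < |v / u| := by
      rw [max_eq_left hmm.le] at hr₂; exact hr₂
    have e1 : (∮ β in C(0, r), (β - (0:ℂ))⁻¹) = 2 * π * Complex.I :=
      circleInt_inv_of_lt (by simpa using hr0)
    have e2 : (∮ β in C(0, r), (β - w₁)⁻¹) = 2 * π * Complex.I :=
      circleInt_inv_of_lt (by rw [habs1]; exact hr1')
    have e3 : (∮ β in C(0, r), (β - w₂)⁻¹) = 0 :=
      circleInt_inv_of_gt hr0.le (by rw [habs2]; exact hr2')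
    rw [e1, e2, e3]
    simp [hlt]
  · -- |v| < |u| : min = |v/u|, max = |u/v|
    have hmm : |v / u| < |u / v| := by
      rw [abs_div, abs_div]
      exact div_lt_div₀ hlt hlt.le (by positivity) hav
    have hr1' : |v / u| < r := by
      rw [min_eq_left hmm.le] at hr₁; exact hr₁
    have hr2' : r < |u / v| := by
      rw [max_eq_right hmm.le] at hr₂; exact hr₂
    have e1 : (∮ β in C(0, r), (β - (0:ℂ))⁻¹) = 2 * π * Complex.I :=
      circleInt_inv_of_lt (by simpa using hr0)
    have e2 : (∮ β in C(0, r), (β - w₁)⁻¹) = 0 :=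
      circleInt_inv_of_gt hr0.le (by rw [habs1]; exact hr2')
    have e3 : (∮ β in C(0, r), (β - w₂)⁻¹) = 2 * π * Complex.I :=
      circleInt_inv_of_lt (by rw [habs2]; exact hr1')
    rw [e1, e2, e3]
    have hne : -((2 * (π:ℂ) * Complex.I)⁻¹ * ((u:ℂ)⁻¹ * (2 * π * Complex.I - 0)) *
        ((2 * (π:ℂ) * Complex.I)⁻¹ * ((u:ℂ)⁻¹ * (2 * π * Complex.I)))) ≠ 0 := by
      field_simp
      exact neg_ne_zero.2 (div_ne_zero (by simpa using h2pi) (mul_ne_zero h2pi (pow_ne_zero 2 hu')))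
    simp only [hne, false_iff, not_lt]
    exact hlt.le
end
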